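/- arXiv:1407.7474 — 3 statements merged into one kernel-verified Lean document; each statement's English description precedes it below -/
import Mathlib

section
/- Let G be a countable nonamenable group acting transitively and amenably on a set X, fix x ∈ X, and let H = G_x be its stabilizer. Then the set Q(H) = {g ∈ G : H ∩ gHg⁻¹ is infinite} is thick in G; that is, for every finite subset F ⊆ G the intersection ⋂_{g∈F} gQ(H) is nonempty. -/
open Pointwise

/-- A mean on `X`: a finitely additive probability measure defined on all subsets of `X`. -/
structure Mean (X : Type*) where
  m : Set X → ℝ
  nonneg : ∀ A : Set X, 0 ≤ m A
  total : m Set.univ = 1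
  fin_add : ∀ A B : Set X, Disjoint A B → m (A ∪ B) = m A + m B

/-- A mean on a `G`-set `X` is invariant if it is preserved by the action of every `g ∈ G`. -/
def MeanInvariant (G : Type*) [Group G] {X : Type*} [MulAction G X] (m : Mean X) : Prop :=
  ∀ (g : G) (A : Set X), m.m ((fun x => g • x) '' A) = m.m A

/-- The action of `G` on `X` is amenable: there is a `G`-invariant mean on `X`. -/
def AmenableAction (G : Type*) [Group G] (X : Type*) [MulAction G X] : Prop :=
  ∃ m : Mean X, MeanInvariant G m

/-- A group is amenable if its left translation action on itself admits an invariant mean. -/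
def AmenableGroup (G : Type*) [Group G] : Prop :=
  ∃ m : Mean G, ∀ (g : G) (A : Set G), m.m ((fun x => g * x) '' A) = m.m A

/-- `H` is `L`-q-normal in `M` if `{g ∈ M : gHg⁻¹ ∩ H ∈ L}` generates `M`. -/
def IsLQNormal {G : Type*} [Group G] (L : Subgroup G → Prop) (H M : Subgroup G) : Prop :=
  H ≤ M ∧
    Subgroup.closure
      {g : G | g ∈ M ∧ L (Subgroup.map (MulAut.conj g).toMonoidHom H ⊓ H)} = M

/-- `H` is `L`-wq-normal in `M`: there is an increasing ordinal-indexed chain from `H` to `M`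
whose unions of initial segments are `L`-q-normal at every stage. -/
def IsLWQNormal {G : Type*} [Group G] (L : Subgroup G → Prop) (H M : Subgroup G) : Prop :=
  ∃ (lam : Ordinal.{0}) (c : Ordinal.{0} → Subgroup G),
    (∀ α β : Ordinal.{0}, α ≤ β → β ≤ lam → c α ≤ c β) ∧
    c 0 = H ∧ c lam = M ∧
    ∀ α : Ordinal.{0}, 0 < α → α ≤ lam →
      IsLQNormal L (⨆ (β : Ordinal.{0}) (_ : β < α), c β) (c α)

/-- q*-normality: `{g ∈ M : gHg⁻¹ ∩ H nonamenable}` generates `M`. -/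
def IsQStarNormal {G : Type*} [Group G] (H M : Subgroup G) : Prop :=
  IsLQNormal (fun K => ¬ AmenableGroup ↥K) H M

/-- wq*-normality. -/
def IsWQStarNormal {G : Type*} [Group G] (H M : Subgroup G) : Prop :=
  IsLWQNormal (fun K => ¬ AmenableGroup ↥K) H M

/-- q-normality: `{g ∈ M : gHg⁻¹ ∩ H infinite}` generates `M`. -/
def IsQNormal {G : Type*} [Group G] (H M : Subgroup G) : Prop :=
  IsLQNormal (fun K => ((K : Set G)).Infinite) H M

/-- wq-normality. -/
def IsWQNormal {G : Type*} [Group G] (H M : Subgroup G) : Prop :=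
  IsLWQNormal (fun K => ((K : Set G)).Infinite) H M

/-- `n`-degree `L`-wq-normality in `G`: `L₀ = L`, `L_{n+1} = {H : H is Lₙ-wq-normal in G}`. -/
def NDegLWQNormal {G : Type*} [Group G] (L : Subgroup G → Prop) : ℕ → Subgroup G → Prop
  | 0, H => L H
  | n + 1, H => IsLWQNormal (NDegLWQNormal L n) H ⊤

/-- The isoperimetric constant `φ_S(X)` of a `G`-set `X` with respect to a finite `S ⊆ G`. -/
noncomputable def phiConst {G : Type*} [Group G] (S : Finset G) (X : Type*) [MulAction G X] :
    ℝ :=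
  sInf {r : ℝ | ∃ P : Finset X, P.Nonempty ∧
    r = (∑ s ∈ S, (((s • (P : Set X)) \ (P : Set X)).ncard : ℝ)) / (P.card : ℝ)}



namespace Mean

variable {Y : Type*} (m : Mean Y)

lemma empty' : m.m ∅ = 0 := by
  have := m.fin_add ∅ ∅ (disjoint_bot_left)
  simp at this; linarith

lemma add_compl (A : Set Y) : m.m A + m.m Aᶜ = 1 := by
  rw [← m.fin_add A Aᶜ disjoint_compl_right, Set.union_compl_self, m.total]

lemma mono {A B : Set Y} (h : A ⊆ B) : m.m A ≤ m.m B := by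
  have : m.m (A ∪ (B \ A)) = m.m A + m.m (B \ A) :=
    m.fin_add _ _ (Set.disjoint_sdiff_right.mono_left le_rfl)
  rw [Set.union_diff_cancel h] at this
  have := m.nonneg (B \ A); linarith

lemma le_one (A : Set Y) : m.m A ≤ 1 := by
  have := m.mono (Set.subset_univ A); rwa [m.total] at this

lemma union_le (A B : Set Y) : m.m (A ∪ B) ≤ m.m A + m.m B := by
  have h1 : m.m (A ∪ B) = m.m A + m.m (B \ A) := by
    rw [← m.fin_add A (B \ A) Set.disjoint_sdiff_right, Set.union_diff_self]
  have h2 : m.m (B \ A) ≤ m.m B := m.mono Set.diff_subset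
  linarith

lemma biUnion_le {ι : Type*} (F : Finset ι) (A : ι → Set Y) :
    m.m (⋃ i ∈ F, A i) ≤ ∑ i ∈ F, m.m (A i) := by
  classical
  induction F using Finset.induction_on with
  | empty => simp [m.empty']
  | insert _ _ hnot ih =>
    rename_i a s
    rw [Finset.set_biUnion_insert, Finset.sum_insert hnot]
    calc m.m (A a ∪ ⋃ i ∈ s, A i) ≤ m.m (A a) + m.m (⋃ i ∈ s, A i) := m.union_le _ _
      _ ≤ _ := by linarith

lemma inter_conull {A : Set Y} (hA : m.m A = 1) (S : Set Y) : m.m S = m.m (S ∩ A) := by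
  have hc : m.m Aᶜ = 0 := by have := m.add_compl A; linarith
  have h1 : m.m (S ∩ Aᶜ) ≤ 0 := hc ▸ m.mono Set.inter_subset_right
  have h2 : 0 ≤ m.m (S ∩ Aᶜ) := m.nonneg _
  have : m.m ((S ∩ A) ∪ (S ∩ Aᶜ)) = m.m (S ∩ A) + m.m (S ∩ Aᶜ) := by
    refine m.fin_add _ _ ?_
    exact Disjoint.mono Set.inter_subset_right Set.inter_subset_right disjoint_compl_right
  rw [← Set.inter_union_distrib_left, Set.union_compl_self, Set.inter_univ] at this
  linarith

/-- simple `ℕ`-valued integral with cutoff `N`. -/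
noncomputable def natInt (a : Y → ℕ) (N : ℕ) : ℝ :=
  ∑ k ∈ Finset.Icc 1 N, m.m {y | k ≤ a y}

lemma natInt_nonneg (a : Y → ℕ) (N : ℕ) : 0 ≤ m.natInt a N :=
  Finset.sum_nonneg fun _ _ => m.nonneg _

lemma natInt_mono {a b : Y → ℕ} (h : ∀ y, a y ≤ b y) (N : ℕ) :
    m.natInt a N ≤ m.natInt b N :=
  Finset.sum_le_sum fun k _ => m.mono fun y hy => le_trans hy (h y)

lemma natInt_stable {a : Y → ℕ} {N N' : ℕ} (ha : ∀ y, a y ≤ N) (h : N ≤ N') :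
    m.natInt a N' = m.natInt a N := by
  unfold natInt
  refine (Finset.sum_subset (Finset.Icc_subset_Icc_right h) fun k _ hk => ?_).symm
  have hk' : N < k := by
    simp only [Finset.mem_Icc, not_and, not_le] at hk ⊢
    rename_i hkk
    rcases Finset.mem_Icc.mp hkk with ⟨h1, _⟩
    exact hk h1
  have : {y | k ≤ a y} = (∅ : Set Y) := by
    ext y; simp only [Set.mem_setOf_eq, Set.mem_empty_iff_false, iff_false, not_le]
    exact lt_of_le_of_lt (ha y) hk'
  rw [this, m.empty']



lemma natInt_congr {a b : Y → ℕ} (h : ∀ y, a y = b y) (N : ℕ) :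
    m.natInt a N = m.natInt b N := by
  unfold natInt
  refine Finset.sum_congr rfl fun k _ => ?_
  congr 1; ext y; simp [h y]

lemma natInt_eq_range (a : Y → ℕ) (N : ℕ) :
    m.natInt a N = ∑ j ∈ Finset.range N, m.m {y | j + 1 ≤ a y} := by
  induction N with
  | zero => simp [natInt]
  | succ n ih =>
    rw [Finset.sum_range_succ, ← ih]
    unfold natInt
    rw [Finset.sum_Icc_succ_top (by omega : 1 ≤ n + 1)]

lemma natInt_add_indicator (a : Y → ℕ) (B : Set Y) [∀ y, Decidable (y ∈ B)] {N : ℕ} (ha : ∀ y, a y ≤ N) :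
    m.natInt (fun y => a y + (if y ∈ B then 1 else 0)) (N + 1)
      = m.natInt a (N + 1) + m.m B := by
  have hsplit : ∀ j : ℕ, {y | j + 1 ≤ a y + (if y ∈ B then 1 else 0)}
      = (B ∩ {y | j ≤ a y}) ∪ (Bᶜ ∩ {y | j + 1 ≤ a y}) := by
    intro j; ext y
    by_cases hy : y ∈ B <;>
      simp [hy, Set.mem_setOf_eq] <;> omega
  rw [natInt_eq_range]
  calc ∑ j ∈ Finset.range (N + 1), m.m {y | j + 1 ≤ a y + (if y ∈ B then 1 else 0)}
      = ∑ j ∈ Finset.range (N + 1),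
          (m.m (B ∩ {y | j ≤ a y}) + m.m (Bᶜ ∩ {y | j + 1 ≤ a y})) := by
        refine Finset.sum_congr rfl fun j _ => ?_
        rw [hsplit j]
        exact m.fin_add _ _
          (Disjoint.mono Set.inter_subset_left Set.inter_subset_left disjoint_compl_right)
    _ = (∑ j ∈ Finset.range (N + 1), m.m (B ∩ {y | j ≤ a y}))
          + ∑ j ∈ Finset.range (N + 1), m.m (Bᶜ ∩ {y | j + 1 ≤ a y}) :=
        Finset.sum_add_distrib
    _ = (m.m B + ∑ j ∈ Finset.range N, m.m (B ∩ {y | j + 1 ≤ a y}))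
          + ∑ j ∈ Finset.range N, m.m (Bᶜ ∩ {y | j + 1 ≤ a y}) := by
        rw [Finset.sum_range_succ' (fun j => m.m (B ∩ {y | j ≤ a y})) N,
          Finset.sum_range_succ]
        have h0 : (B ∩ {y | 0 ≤ a y}) = B := by simp
        have hN : (Bᶜ ∩ {y | N + 1 ≤ a y}) = ∅ := by
          ext y; simp only [Set.mem_inter_iff, Set.mem_setOf_eq, Set.mem_empty_iff_false,
            iff_false, not_and, not_le]
          exact fun _ => lt_of_le_of_lt (ha y) (Nat.lt_succ_self N)
        rw [h0, hN, m.empty']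
        ring
    _ = m.m B + ∑ j ∈ Finset.range N, m.m {y | j + 1 ≤ a y} := by
        rw [add_assoc, ← Finset.sum_add_distrib]
        congr 1
        refine Finset.sum_congr rfl fun j _ => ?_
        rw [← m.fin_add _ _
          (Disjoint.mono Set.inter_subset_left Set.inter_subset_left disjoint_compl_right)]
        congr 1
        rw [← Set.union_inter_distrib_right, Set.union_compl_self, Set.univ_inter]
    _ = m.natInt a (N + 1) + m.m B := by
        rw [← natInt_eq_range, m.natInt_stable ha (Nat.le_succ N)]
        ring

lemma natInt_add : ∀ (n : ℕ) (a b : Y → ℕ), (∀ y, b y ≤ n) → ∀ (N : ℕ),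
    (∀ y, a y + b y ≤ N) →
    m.natInt (fun y => a y + b y) N = m.natInt a N + m.natInt b N := by
  intro n
  induction n with
  | zero =>
    intro a b hb N hab
    have h1 : m.natInt (fun y => a y + b y) N = m.natInt a N :=
      m.natInt_congr (fun y => by have := hb y; omega) N
    have h2 : m.natInt b N = 0 := by
      rw [m.natInt_stable (fun y => hb y) (Nat.zero_le N)]
      simp [natInt]
    rw [h1, h2, add_zero]
  | succ n ih =>
    intro a b hb N hab
    classical
    set B : Set Y := {y | 1 ≤ b y} with hB
    set b' : Y → ℕ := fun y => b y - 1 with hb'def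
    have hkey : ∀ y, b y = b' y + (if y ∈ B then 1 else 0) := by
      intro y
      by_cases hy : (1:ℕ) ≤ b y
      · rw [if_pos (show y ∈ B from hy)]; simp only [hb'def]; omega
      · rw [if_neg (show y ∉ B from hy)]; simp only [hb'def]; omega
    have hb' : ∀ y, b' y ≤ n := fun y => by have := hb y; simp only [hb'def]; omega
    have hab' : ∀ y, a y + b' y ≤ N := fun y => by
      have := hab y; simp only [hb'def]; omega
    have hbN : ∀ y, b y ≤ N := fun y => le_trans (Nat.le_add_left _ _) (hab y)
    have hb'N : ∀ y, b' y ≤ N := fun y => le_trans (Nat.le_add_left _ _) (hab' y)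
    have step2 : m.natInt b N = m.natInt b' (N + 1) + m.m B := by
      calc m.natInt b N = m.natInt b (N + 1) := (m.natInt_stable hbN (Nat.le_succ N)).symm
        _ = m.natInt (fun y => b' y + if y ∈ B then 1 else 0) (N + 1) :=
            m.natInt_congr hkey _
        _ = m.natInt b' (N + 1) + m.m B := m.natInt_add_indicator b' B hb'N
    have step1 : m.natInt (fun y => a y + b y) N
        = m.natInt a N + (m.natInt b' (N + 1) + m.m B) := by
      calc m.natInt (fun y => a y + b y) N
          = m.natInt (fun y => a y + b y) (N + 1) :=
            (m.natInt_stable hab (Nat.le_succ N)).symm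
        _ = m.natInt (fun y => (a y + b' y) + if y ∈ B then 1 else 0) (N + 1) :=
            m.natInt_congr (fun y => by
              by_cases hy : (1:ℕ) ≤ b y
              · rw [if_pos (show y ∈ B from hy)]; simp only [hb'def]; omega
              · rw [if_neg (show y ∉ B from hy)]; simp only [hb'def]; omega) _
        _ = m.natInt (fun y => a y + b' y) (N + 1) + m.m B :=
            m.natInt_add_indicator (fun y => a y + b' y) B hab'
        _ = (m.natInt a (N + 1) + m.natInt b' (N + 1)) + m.m B := by
            rw [ih a b' hb' (N + 1) (fun y => le_trans (hab' y) (Nat.le_succ N))]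
        _ = m.natInt a N + (m.natInt b' (N + 1) + m.m B) := by
            rw [m.natInt_stable (fun y => le_trans (Nat.le_add_right _ _) (hab y))
              (Nat.le_succ N)]
            ring
    rw [step1, step2]


/-! ### The real-valued integral -/

/-- dyadic-type approximation of `f` at scale `n`. -/
noncomputable def apx (n : ℕ) (f : Y → ℝ) : Y → ℕ := fun y => ⌊(n : ℝ) * f y⌋₊

noncomputable def cInt (n : ℕ) (f : Y → ℝ) : ℝ := (n : ℝ)⁻¹ * m.natInt (Mean.apx n f) n

/-- The integral of `f` against the mean `m` (intended for `0 ≤ f ≤ 1`). -/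
noncomputable def intgr (f : Y → ℝ) : ℝ := ⨆ i : ℕ, m.cInt (2 ^ i) f

lemma apx_le {f : Y → ℝ} (h1 : ∀ y, f y ≤ 1) (n : ℕ) : ∀ y, Mean.apx n f y ≤ n := by
  intro y
  have : (n : ℝ) * f y ≤ (n : ℝ) := by
    nlinarith [h1 y, Nat.cast_nonneg (α := ℝ) n]
  calc ⌊(n : ℝ) * f y⌋₊ ≤ ⌊(n : ℝ)⌋₊ := Nat.floor_le_floor this
    _ = n := Nat.floor_natCast n

lemma cInt_nonneg (n : ℕ) (f : Y → ℝ) : 0 ≤ m.cInt n f := by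
  unfold cInt
  have := m.natInt_nonneg (Mean.apx n f) n
  positivity

lemma cInt_le_one {f : Y → ℝ} (h1 : ∀ y, f y ≤ 1) (n : ℕ) : m.cInt n f ≤ 1 := by
  rcases Nat.eq_zero_or_pos n with rfl | hn
  · simp [cInt]
  · unfold cInt
    have hle : m.natInt (Mean.apx n f) n ≤ (n : ℝ) := by
      calc m.natInt (Mean.apx n f) n ≤ ∑ _k ∈ Finset.Icc 1 n, (1 : ℝ) :=
            Finset.sum_le_sum fun k _ => m.le_one _
        _ = (n : ℝ) := by simp
    have hn' : (0:ℝ) < (n:ℝ)⁻¹ := by positivity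
    calc (n:ℝ)⁻¹ * m.natInt (Mean.apx n f) n ≤ (n:ℝ)⁻¹ * (n:ℝ) := by nlinarith
      _ = 1 := by field_simp

lemma cInt_mono {f g : Y → ℝ} (h : ∀ y, f y ≤ g y) (n : ℕ) : m.cInt n f ≤ m.cInt n g := by
  unfold cInt
  have : m.natInt (Mean.apx n f) n ≤ m.natInt (Mean.apx n g) n := by
    refine m.natInt_mono (fun y => ?_) n
    exact Nat.floor_le_floor (by nlinarith [h y, Nat.cast_nonneg (α := ℝ) n])
  have hn' : (0:ℝ) ≤ (n:ℝ)⁻¹ := by positivity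
  nlinarith

lemma levelset_apx {f : Y → ℝ} (h0 : ∀ y, 0 ≤ f y) (n : ℕ) {k : ℕ} (hk : 1 ≤ k) :
    {y | k ≤ Mean.apx n f y} = {y | (k : ℝ) ≤ (n : ℝ) * f y} := by
  ext y
  simp only [Set.mem_setOf_eq, Mean.apx]
  exact Nat.le_floor_iff (mul_nonneg (Nat.cast_nonneg n) (h0 y))

lemma sum_range_pair (v : ℕ → ℝ) (n : ℕ) :
    ∑ j ∈ Finset.range (2 * n), v j = ∑ k ∈ Finset.range n, (v (2 * k) + v (2 * k + 1)) := by
  induction n with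
  | zero => simp
  | succ n ih =>
    have h2 : 2 * (n + 1) = (2 * n + 1) + 1 := by ring
    rw [h2, Finset.sum_range_succ, Finset.sum_range_succ, ih, Finset.sum_range_succ]
    ring

lemma cInt_double {f : Y → ℝ} (h0 : ∀ y, 0 ≤ f y) {n : ℕ} (hn : 0 < n) :
    m.cInt n f ≤ m.cInt (2 * n) f ∧ m.cInt (2 * n) f ≤ m.cInt n f + (n : ℝ)⁻¹ := by
  set u : ℕ → ℝ := fun j => m.m {y | (j : ℝ) ≤ (n : ℝ) * f y} with hu
  have hu_anti : ∀ {j j' : ℕ}, j ≤ j' → u j' ≤ u j := by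
    intro j j' h
    refine m.mono fun y hy => ?_
    simp only [Set.mem_setOf_eq] at hy ⊢
    have : (j : ℝ) ≤ (j' : ℝ) := Nat.cast_le.mpr h
    linarith
  have hu01 : ∀ j, 0 ≤ u j ∧ u j ≤ 1 := fun j => ⟨m.nonneg _, m.le_one _⟩
  -- express cInt n f
  have hcn : m.cInt n f = (n : ℝ)⁻¹ * ∑ j ∈ Finset.range n, u (j + 1) := by
    unfold cInt
    rw [m.natInt_eq_range]
    congr 1
    refine Finset.sum_congr rfl fun j _ => ?_
    rw [levelset_apx h0 n (by omega)]
  -- express cInt (2n) f ; level sets for 2n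
  set u' : ℕ → ℝ := fun j => m.m {y | (j : ℝ) ≤ ((2 * n : ℕ) : ℝ) * f y} with hu'
  have hu'_anti : ∀ {j j' : ℕ}, j ≤ j' → u' j' ≤ u' j := by
    intro j j' h
    refine m.mono fun y hy => ?_
    simp only [Set.mem_setOf_eq] at hy ⊢
    have : (j : ℝ) ≤ (j' : ℝ) := Nat.cast_le.mpr h
    linarith
  have hc2n : m.cInt (2 * n) f = ((2 * n : ℕ) : ℝ)⁻¹ *
      ∑ k ∈ Finset.range n, (u' (2 * k + 1) + u' (2 * k + 2)) := by
    unfold cInt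
    rw [m.natInt_eq_range]
    have : ∑ j ∈ Finset.range (2 * n), m.m {y | j + 1 ≤ Mean.apx (2 * n) f y}
        = ∑ j ∈ Finset.range (2 * n), u' (j + 1) := by
      refine Finset.sum_congr rfl fun j _ => ?_
      rw [levelset_apx h0 (2 * n) (by omega)]
    rw [this, sum_range_pair]
  have hkey : ∀ k : ℕ, u' (2 * k) = u k := by
    intro k
    simp only [hu, hu']
    congr 1
    ext y
    simp only [Set.mem_setOf_eq]
    push_cast
    constructor <;> intro h <;> nlinarith
  have hn0 : (0:ℝ) < (n : ℝ) := by exact_mod_cast hn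
  have h2n : ((2 * n : ℕ) : ℝ) = 2 * (n : ℝ) := by push_cast; ring
  constructor
  · -- lower bound
    rw [hcn, hc2n]
    have hterm : ∀ k ∈ Finset.range n, 2 * u (k + 1) ≤ u' (2 * k + 1) + u' (2 * k + 2) := by
      intro k _
      have h1 : u' (2 * k + 2) = u (k + 1) := by
        have := hkey (k + 1); rwa [show 2 * (k + 1) = 2 * k + 2 by ring] at this
      have h2 : u' (2 * k + 2) ≤ u' (2 * k + 1) := hu'_anti (by omega)
      linarith
    have hsum : 2 * ∑ k ∈ Finset.range n, u (k + 1)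
        ≤ ∑ k ∈ Finset.range n, (u' (2 * k + 1) + u' (2 * k + 2)) := by
      rw [Finset.mul_sum]
      exact Finset.sum_le_sum fun k hk => hterm k hk
    rw [h2n]
    rw [show (2 * (n:ℝ))⁻¹ = 2⁻¹ * (n:ℝ)⁻¹ by rw [mul_inv]]
    have hninv : (0:ℝ) < (n:ℝ)⁻¹ := by positivity
    nlinarith
  · -- upper bound
    rw [hcn, hc2n]
    have hterm : ∀ k ∈ Finset.range n, u' (2 * k + 1) + u' (2 * k + 2) ≤ 2 * u k := by
      intro k _
      have h1 : u' (2 * k + 1) ≤ u' (2 * k) := hu'_anti (by omega)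
      have h2 : u' (2 * k + 2) ≤ u' (2 * k) := hu'_anti (by omega)
      rw [hkey k] at h1 h2
      linarith
    have hsum : ∑ k ∈ Finset.range n, (u' (2 * k + 1) + u' (2 * k + 2))
        ≤ 2 * ∑ k ∈ Finset.range n, u k := by
      rw [Finset.mul_sum]
      exact Finset.sum_le_sum fun k hk => hterm k hk
    have hshift : ∑ k ∈ Finset.range n, u k
        ≤ 1 + ∑ k ∈ Finset.range n, u (k + 1) := by
      rcases Nat.exists_eq_succ_of_ne_zero (Nat.pos_iff_ne_zero.mp hn) with ⟨p, rfl⟩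
      rw [Finset.sum_range_succ' u p, Finset.sum_range_succ (fun k => u (k + 1)) p]
      have := (hu01 0).2
      have := (hu01 (p + 1)).1
      linarith
    rw [h2n]
    rw [show (2 * (n:ℝ))⁻¹ = 2⁻¹ * (n:ℝ)⁻¹ by rw [mul_inv]]
    have hninv : (0:ℝ) < (n:ℝ)⁻¹ := by positivity
    have hs0 : 0 ≤ ∑ k ∈ Finset.range n, u (k + 1) :=
      Finset.sum_nonneg fun k _ => (hu01 (k + 1)).1
    nlinarith

lemma cInt_dyadic_mono {f : Y → ℝ} (h0 : ∀ y, 0 ≤ f y) {i j : ℕ} (hij : i ≤ j) :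
    m.cInt (2 ^ i) f ≤ m.cInt (2 ^ j) f := by
  induction j, hij using Nat.le_induction with
  | base => exact le_refl _
  | succ j hij ih =>
    refine le_trans ih ?_
    have h2 : (2:ℕ) ^ (j + 1) = 2 * 2 ^ j := by ring
    rw [h2]
    exact (m.cInt_double h0 (Nat.pow_pos (by norm_num : 0 < 2) : 0 < 2 ^ j)).1

lemma cInt_dyadic_upper {f : Y → ℝ} (h0 : ∀ y, 0 ≤ f y) {i j : ℕ} (hij : i ≤ j) :
    m.cInt (2 ^ j) f ≤ m.cInt (2 ^ i) f
      + 2 * (((2:ℕ) ^ i : ℕ) : ℝ)⁻¹ - 2 * (((2:ℕ) ^ j : ℕ) : ℝ)⁻¹ := by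
  induction j, hij using Nat.le_induction with
  | base => linarith [le_refl (m.cInt (2 ^ i) f)]
  | succ j hij ih =>
    have h2 : (2:ℕ) ^ (j + 1) = 2 * 2 ^ j := by ring
    have hstep : m.cInt (2 ^ (j+1)) f ≤ m.cInt (2 ^ j) f + (((2:ℕ) ^ j : ℕ) : ℝ)⁻¹ := by
      rw [h2]
      exact (m.cInt_double h0 (Nat.pow_pos (by norm_num : 0 < 2) : 0 < 2 ^ j)).2
    have hcast : (((2:ℕ) ^ (j+1) : ℕ) : ℝ) = 2 * (((2:ℕ) ^ j : ℕ) : ℝ) := by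
      push_cast [pow_succ]; ring
    have hpos : (0:ℝ) < (((2:ℕ) ^ j : ℕ) : ℝ) := by positivity
    have hinv : (((2:ℕ) ^ (j+1) : ℕ) : ℝ)⁻¹ = (((2:ℕ) ^ j : ℕ) : ℝ)⁻¹ / 2 := by
      rw [hcast, mul_inv]; ring
    rw [hinv]
    have := (inv_pos.mpr hpos)
    linarith

lemma bddAbove_cInt {f : Y → ℝ} (h1 : ∀ y, f y ≤ 1) :
    BddAbove (Set.range fun i : ℕ => m.cInt (2 ^ i) f) := by
  refine ⟨1, ?_⟩
  rintro r ⟨i, rfl⟩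
  exact m.cInt_le_one h1 _

lemma cInt_le_intgr {f : Y → ℝ} (h1 : ∀ y, f y ≤ 1) (i : ℕ) :
    m.cInt (2 ^ i) f ≤ m.intgr f :=
  le_ciSup (m.bddAbove_cInt h1) i

lemma intgr_le_cInt {f : Y → ℝ} (h0 : ∀ y, 0 ≤ f y) (h1 : ∀ y, f y ≤ 1) (i : ℕ) :
    m.intgr f ≤ m.cInt (2 ^ i) f + 2 * (((2:ℕ) ^ i : ℕ) : ℝ)⁻¹ := by
  refine ciSup_le fun j => ?_
  rcases le_total i j with hij | hij
  · have := m.cInt_dyadic_upper h0 hij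
    have hj : (0:ℝ) ≤ (((2:ℕ) ^ j : ℕ) : ℝ)⁻¹ := by positivity
    linarith
  · have := m.cInt_dyadic_mono h0 hij
    have hi : (0:ℝ) ≤ (((2:ℕ) ^ i : ℕ) : ℝ)⁻¹ := by positivity
    linarith

lemma intgr_nonneg {f : Y → ℝ} (h1 : ∀ y, f y ≤ 1) : 0 ≤ m.intgr f :=
  le_trans (m.cInt_nonneg (2 ^ 0) f) (m.cInt_le_intgr h1 0)

lemma intgr_mono {f g : Y → ℝ} (h : ∀ y, f y ≤ g y) (h1 : ∀ y, g y ≤ 1) :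
    m.intgr f ≤ m.intgr g :=
  ciSup_le fun i => le_trans (m.cInt_mono h _) (m.cInt_le_intgr h1 i)

lemma le_of_forall_dyadic {x y c : ℝ} (h : ∀ i : ℕ, x ≤ y + c * (((2:ℕ) ^ i : ℕ) : ℝ)⁻¹) :
    x ≤ y := by
  by_contra hxy
  push_neg at hxy
  obtain ⟨i, hi⟩ := pow_unbounded_of_one_lt (c / (x - y)) (one_lt_two (α := ℝ))
  have hpos : (0:ℝ) < (2:ℝ) ^ i := by positivity
  have hc : c < 2 ^ i * (x - y) := by
    rw [div_lt_iff₀ (by linarith)] at hi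
    linarith
  have hcast : (((2:ℕ) ^ i : ℕ) : ℝ) = (2:ℝ) ^ i := by push_cast; ring
  have h2 : c * (((2:ℕ) ^ i : ℕ) : ℝ)⁻¹ < x - y := by
    rw [hcast]
    calc c * ((2:ℝ) ^ i)⁻¹ < (2 ^ i * (x - y)) * ((2:ℝ) ^ i)⁻¹ :=
          mul_lt_mul_of_pos_right hc (by positivity)
      _ = x - y := by field_simp
  have := h i
  linarith

lemma cInt_add_aux {f g : Y → ℝ} (h0f : ∀ y, 0 ≤ f y) (h0g : ∀ y, 0 ≤ g y)
    (h1fg : ∀ y, f y + g y ≤ 1) {n : ℕ} (hn : 0 < n) :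
    m.cInt n f + m.cInt n g ≤ m.cInt n (fun y => f y + g y) ∧
      m.cInt n (fun y => f y + g y) ≤ m.cInt n f + m.cInt n g + (n : ℝ)⁻¹ := by
  classical
  set a : Y → ℕ := Mean.apx n f with ha
  set b : Y → ℕ := Mean.apx n g with hb
  set cc : Y → ℕ := Mean.apx n (fun y => f y + g y) with hcc
  have hfl : ∀ y, (a y : ℝ) ≤ (n:ℝ) * f y := fun y =>
    Nat.floor_le (mul_nonneg (Nat.cast_nonneg n) (h0f y))
  have hgl : ∀ y, (b y : ℝ) ≤ (n:ℝ) * g y := fun y =>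
    Nat.floor_le (mul_nonneg (Nat.cast_nonneg n) (h0g y))
  have hab_le : ∀ y, a y + b y ≤ cc y := by
    intro y
    refine Nat.le_floor ?_
    push_cast
    have := hfl y; have := hgl y
    nlinarith
  have hc_le : ∀ y, cc y ≤ a y + b y + 1 := by
    intro y
    have h1 : (n:ℝ) * f y < (a y : ℝ) + 1 := Nat.lt_floor_add_one _
    have h2 : (n:ℝ) * g y < (b y : ℝ) + 1 := Nat.lt_floor_add_one _
    have h3 : cc y < a y + b y + 2 := by
      have : (n:ℝ) * (f y + g y) < ((a y + b y + 2 : ℕ) : ℝ) := by push_cast; nlinarith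
      exact (Nat.floor_lt (mul_nonneg (Nat.cast_nonneg n)
        (show (0:ℝ) ≤ f y + g y by have := h0f y; have := h0g y; linarith))).mpr this
    omega
  have h1f : ∀ y, f y ≤ 1 := fun y => by have := h0g y; have := h1fg y; linarith
  have h1g : ∀ y, g y ≤ 1 := fun y => by have := h0f y; have := h1fg y; linarith
  have ha_n : ∀ y, a y ≤ n := apx_le h1f n
  have hb_n : ∀ y, b y ≤ n := apx_le h1g n
  have hcc_n : ∀ y, cc y ≤ n := apx_le h1fg n
  have hab_n : ∀ y, a y + b y ≤ n := fun y => le_trans (hab_le y) (hcc_n y)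
  letI : ∀ y : Y, Decidable (y ∈ (Set.univ : Set Y)) := fun y => .isTrue (Set.mem_univ y)
  have hadd : m.natInt (fun y => a y + b y) (n + 1)
      = m.natInt a (n + 1) + m.natInt b (n + 1) :=
    m.natInt_add n a b hb_n (n + 1) (fun y => le_trans (hab_n y) (Nat.le_succ n))
  have hstab_a : m.natInt a (n + 1) = m.natInt a n := m.natInt_stable ha_n (Nat.le_succ n)
  have hstab_b : m.natInt b (n + 1) = m.natInt b n := m.natInt_stable hb_n (Nat.le_succ n)
  have hstab_c : m.natInt cc (n + 1) = m.natInt cc n := m.natInt_stable hcc_n (Nat.le_succ n)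
  have hlow : m.natInt a n + m.natInt b n ≤ m.natInt cc n := by
    rw [← hstab_a, ← hstab_b, ← hstab_c, ← hadd]
    exact m.natInt_mono hab_le (n + 1)
  have hup : m.natInt cc n ≤ m.natInt a n + m.natInt b n + 1 := by
    rw [← hstab_a, ← hstab_b, ← hstab_c]
    have step1 : m.natInt cc (n + 1)
        ≤ m.natInt (fun y => (a y + b y) + (if y ∈ (Set.univ : Set Y) then 1 else 0)) (n+1) := by
      refine m.natInt_mono (fun y => ?_) (n + 1)
      simp only [Set.mem_univ, if_true]
      exact hc_le y
    have step2 : m.natInt (fun y => (a y + b y) + (if y ∈ (Set.univ : Set Y) then 1 else 0)) (n+1)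
        = m.natInt (fun y => a y + b y) (n + 1) + m.m Set.univ :=
      m.natInt_add_indicator (fun y => a y + b y) Set.univ hab_n
    rw [m.total] at step2
    rw [hadd] at step2
    linarith [step1, le_of_eq step2]
  have hninv : (0:ℝ) ≤ (n:ℝ)⁻¹ := by positivity
  have hval : (n:ℝ)⁻¹ * (n:ℝ) = 1 := by
    field_simp
  constructor
  · unfold cInt
    rw [← ha, ← hb, ← hcc]
    calc (n:ℝ)⁻¹ * m.natInt a n + (n:ℝ)⁻¹ * m.natInt b n
        = (n:ℝ)⁻¹ * (m.natInt a n + m.natInt b n) := by ring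
      _ ≤ (n:ℝ)⁻¹ * m.natInt cc n := mul_le_mul_of_nonneg_left hlow hninv
  · unfold cInt
    rw [← ha, ← hb, ← hcc]
    calc (n:ℝ)⁻¹ * m.natInt cc n ≤ (n:ℝ)⁻¹ * (m.natInt a n + m.natInt b n + 1) :=
          mul_le_mul_of_nonneg_left hup hninv
      _ = (n:ℝ)⁻¹ * m.natInt a n + (n:ℝ)⁻¹ * m.natInt b n + (n:ℝ)⁻¹ := by ring

lemma intgr_add {f g : Y → ℝ} (h0f : ∀ y, 0 ≤ f y) (h0g : ∀ y, 0 ≤ g y)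
    (h1fg : ∀ y, f y + g y ≤ 1) :
    m.intgr (fun y => f y + g y) = m.intgr f + m.intgr g := by
  have h1f : ∀ y, f y ≤ 1 := fun y => by have := h0g y; have := h1fg y; linarith
  have h1g : ∀ y, g y ≤ 1 := fun y => by have := h0f y; have := h1fg y; linarith
  have h0fg : ∀ y, 0 ≤ f y + g y := fun y => by have := h0f y; have := h0g y; linarith
  have hpow : ∀ i : ℕ, 0 < 2 ^ i := fun i => Nat.pow_pos (by norm_num)
  have hinveq : ∀ i : ℕ, ((2 ^ i : ℕ) : ℝ)⁻¹ = 1 * ((2 ^ i : ℕ) : ℝ)⁻¹ := fun i => by ring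
  refine le_antisymm ?_ ?_
  · refine le_of_forall_dyadic (c := 3) fun i => ?_
    have h1 := m.intgr_le_cInt h0fg h1fg i
    have h2 := (m.cInt_add_aux h0f h0g h1fg (hpow i)).2
    have h3 := m.cInt_le_intgr h1f i
    have h4 := m.cInt_le_intgr h1g i
    have : (((2:ℕ) ^ i : ℕ) : ℝ)⁻¹ ≤ (((2:ℕ) ^ i : ℕ) : ℝ)⁻¹ := le_refl _
    linarith
  · refine le_of_forall_dyadic (c := 4) fun i => ?_
    have h1 := m.intgr_le_cInt h0f h1f i
    have h2 := m.intgr_le_cInt h0g h1g i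
    have h3 := (m.cInt_add_aux h0f h0g h1fg (hpow i)).1
    have h4 := m.cInt_le_intgr h1fg i
    linarith

lemma intgr_indicator (A : Set Y) [∀ y, Decidable (y ∈ A)] :
    m.intgr (fun y => if y ∈ A then (1:ℝ) else 0) = m.m A := by
  have hc : ∀ n : ℕ, 0 < n → m.cInt n (fun y => if y ∈ A then (1:ℝ) else 0) = m.m A := by
    intro n hn
    unfold cInt
    have hsets : ∀ k ∈ Finset.Icc 1 n,
        m.m {y | k ≤ Mean.apx n (fun y => if y ∈ A then (1:ℝ) else 0) y} = m.m A := by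
      intro k hk
      rcases Finset.mem_Icc.mp hk with ⟨hk1, hkn⟩
      congr 1
      ext y
      simp only [Set.mem_setOf_eq, Mean.apx]
      by_cases hy : y ∈ A
      · simp only [hy, if_true, mul_one, Nat.floor_natCast, iff_true]
        exact hkn
      · simp only [hy, if_false, mul_zero, Nat.floor_zero]
        exact iff_of_false (by omega) not_false
    unfold natInt
    rw [Finset.sum_congr rfl hsets]
    rw [Finset.sum_const, Nat.card_Icc]
    simp only [Nat.add_sub_cancel, nsmul_eq_mul]
    have hne : (n:ℝ) ≠ 0 := by positivity
    field_simp
  unfold intgr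
  have : ∀ i : ℕ, m.cInt (2 ^ i) (fun y => if y ∈ A then (1:ℝ) else 0) = m.m A :=
    fun i => hc _ (Nat.pow_pos (by norm_num : 0 < 2))
  rw [funext this]
  exact ciSup_const

lemma intgr_comp (φ : Y → Y) (hφ : Function.Surjective φ)
    (hφm : ∀ S : Set Y, m.m (φ '' S) = m.m S) (f : Y → ℝ) :
    m.intgr (fun y => f (φ y)) = m.intgr f := by
  have hpre : ∀ S : Set Y, m.m (φ ⁻¹' S) = m.m S := by
    intro S
    rw [← hφm (φ ⁻¹' S), Set.image_preimage_eq S hφ]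
  have hcn : ∀ n : ℕ, m.cInt n (fun y => f (φ y)) = m.cInt n f := by
    intro n
    unfold cInt natInt
    congr 1
    refine Finset.sum_congr rfl fun k _ => ?_
    have : {y | k ≤ Mean.apx n (fun y => f (φ y)) y} = φ ⁻¹' {y | k ≤ Mean.apx n f y} := by
      ext y; simp [Mean.apx, Set.mem_preimage]
    rw [this, hpre]
  unfold intgr
  rw [funext fun i => hcn (2 ^ i)]

end Mean

section Aux

lemma amenableGroup_of_finite {K : Type*} [Group K] [Finite K] : AmenableGroup K := by
  have hK : (0:ℝ) < (Nat.card K : ℝ) := by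
    have := Nat.card_pos (α := K)
    exact_mod_cast this
  refine ⟨⟨fun B => (B.ncard : ℝ) / (Nat.card K : ℝ), ?_, ?_, ?_⟩, ?_⟩
  · intro B; positivity
  · show ((Set.univ : Set K).ncard : ℝ) / (Nat.card K : ℝ) = 1
    rw [Set.ncard_univ]
    exact div_self (ne_of_gt hK)
  · intro B C hd
    show (((B ∪ C) : Set K).ncard : ℝ) / _ = (B.ncard : ℝ) / _ + (C.ncard : ℝ) / _
    rw [Set.ncard_union_eq hd (Set.toFinite B) (Set.toFinite C)]
    push_cast
    ring
  · intro g B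
    show ((((fun x => g * x) '' B).ncard : ℝ)) / _ = (B.ncard : ℝ) / _
    rw [Set.ncard_image_of_injective B (mul_right_injective g)]

lemma amenableGroup_of_mulEquiv {K K' : Type*} [Group K] [Group K'] (e : K ≃* K')
    (h : AmenableGroup K) : AmenableGroup K' := by
  obtain ⟨m, hm⟩ := h
  refine ⟨⟨fun B => m.m (⇑e ⁻¹' B), fun B => m.nonneg _, ?_, ?_⟩, ?_⟩
  · show m.m (⇑e ⁻¹' Set.univ) = 1
    rw [Set.preimage_univ, m.total]
  · intro B C hd
    show m.m (⇑e ⁻¹' (B ∪ C)) = m.m (⇑e ⁻¹' B) + m.m (⇑e ⁻¹' C)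
    rw [Set.preimage_union]
    exact m.fin_add _ _ (hd.preimage _)
  · intro g' B
    show m.m (⇑e ⁻¹' ((fun x => g' * x) '' B)) = m.m (⇑e ⁻¹' B)
    have hkey : ⇑e ⁻¹' ((fun x => g' * x) '' B) = (fun x => e.symm g' * x) '' (⇑e ⁻¹' B) := by
      ext z
      simp only [Set.mem_preimage, Set.mem_image]
      constructor
      · rintro ⟨b, hb, hgb⟩
        refine ⟨e.symm b, by simpa using hb, ?_⟩
        apply e.injective
        rw [map_mul]
        simp [hgb]
      · rintro ⟨w, hw, rfl⟩
        exact ⟨e w, hw, by rw [map_mul]; simp⟩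
    rw [hkey, hm (e.symm g') (⇑e ⁻¹' B)]

theorem amenable_of_invariant_mean {K Y : Type*} [Group K] [MulAction K Y]
    (m : Mean Y) (hm : MeanInvariant K m) (A : Set Y)
    (hAinv : ∀ (k : K) (y : Y), y ∈ A → k • y ∈ A)
    (hApos : 0 < m.m A)
    (hstab : ∀ y ∈ A, AmenableGroup ↥(MulAction.stabilizer K y)) :
    AmenableGroup K := by
  classical
  -- Step 1: normalize the mean so that `A` has full measure
  have hAimg : ∀ k : K, (fun y => k • y) '' A = A := by
    intro k
    apply Set.Subset.antisymm
    · rintro _ ⟨y, hy, rfl⟩; exact hAinv k y hy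
    · intro y hy
      exact ⟨k⁻¹ • y, hAinv k⁻¹ y hy, by simp⟩
  have hkey_inter : ∀ (k : K) (S : Set Y),
      ((fun y => k • y) '' S) ∩ A = (fun y => k • y) '' (S ∩ A) := by
    intro k S
    ext z
    simp only [Set.mem_inter_iff, Set.mem_image]
    constructor
    · rintro ⟨⟨y, hy, rfl⟩, hz⟩
      exact ⟨y, ⟨hy, by have := hAinv k⁻¹ _ hz; rwa [inv_smul_smul] at this⟩, rfl⟩
    · rintro ⟨y, ⟨hy, hyA⟩, rfl⟩
      exact ⟨⟨y, hy, rfl⟩, hAinv k y hyA⟩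
  have hcne : m.m A ≠ 0 := ne_of_gt hApos
  set m₁ : Mean Y := ⟨fun S => m.m (S ∩ A) / m.m A,
    fun S => div_nonneg (m.nonneg _) (le_of_lt hApos),
    by
      show m.m (Set.univ ∩ A) / m.m A = 1
      rw [Set.univ_inter]; exact div_self hcne,
    by
      intro B C hd
      show m.m ((B ∪ C) ∩ A) / m.m A = m.m (B ∩ A) / m.m A + m.m (C ∩ A) / m.m A
      rw [Set.union_inter_distrib_right,
        m.fin_add _ _ (hd.mono Set.inter_subset_left Set.inter_subset_left)]
      ring⟩ with hm₁def
  have hm₁ : MeanInvariant K m₁ := by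
    intro k S
    show m.m (((fun y => k • y) '' S) ∩ A) / m.m A = m.m (S ∩ A) / m.m A
    rw [hkey_inter k S, hm k (S ∩ A)]
  have hm₁A : m₁.m A = 1 := by
    show m.m (A ∩ A) / m.m A = 1
    rw [Set.inter_self]; exact div_self hcne
  -- Step 2: orbit representatives and transversal
  set q : Y → Quotient (MulAction.orbitRel K Y) := Quotient.mk (MulAction.orbitRel K Y)
    with hqdef
  have ht : ∀ y : Y, ∃ k : K, k • (q y).out = y := by
    intro y
    have h : (q y).out ∈ MulAction.orbit K y := Quotient.exact ((q y).out_eq)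
    obtain ⟨k, hk⟩ := h
    exact ⟨k⁻¹, by rw [← hk]; simp⟩
  set t : Y → K := fun y => Classical.choose (ht y) with htdef
  have htt : ∀ y : Y, t y • (q y).out = y := fun y => Classical.choose_spec (ht y)
  have hq_smul : ∀ (k : K) (y : Y), q (k • y) = q y := by
    intro k y
    exact Quotient.sound (MulAction.mem_orbit y k)
  have hrepA : ∀ y : Y, y ∈ A → (q y).out ∈ A := by
    intro y hy
    have h2 := congrArg (fun w => (t y)⁻¹ • w) (htt y)
    simp only [inv_smul_smul] at h2
    rw [h2]
    exact hAinv _ y hy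
  -- Step 3: means on stabilizers of representatives
  have hsm : ∀ c : Quotient (MulAction.orbitRel K Y),
      ∃ μ : Mean ↥(MulAction.stabilizer K c.out), c.out ∈ A →
        ∀ (g : ↥(MulAction.stabilizer K c.out)) (B : Set ↥(MulAction.stabilizer K c.out)),
          μ.m ((fun x => g * x) '' B) = μ.m B := by
    intro c
    by_cases hc : c.out ∈ A
    · obtain ⟨μ, hμ⟩ := hstab _ hc
      exact ⟨μ, fun _ => hμ⟩
    · refine ⟨⟨fun B => if (1 : ↥(MulAction.stabilizer K c.out)) ∈ B then 1 else 0,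
        ?_, ?_, ?_⟩, fun hc' => absurd hc' hc⟩
      · intro B; split <;> norm_num
      · simp
      · intro B C hd
        by_cases h1 : (1 : ↥(MulAction.stabilizer K c.out)) ∈ B
        · have h2 : (1 : ↥(MulAction.stabilizer K c.out)) ∉ C :=
            fun h2 => (Set.disjoint_left.mp hd h1) h2
          simp [Set.mem_union, h1, h2]
        · by_cases h2 : (1 : ↥(MulAction.stabilizer K c.out)) ∈ C <;>
            simp [Set.mem_union, h1, h2]
  choose μ hμ using hsm
  -- Step 4: the function F
  set F : Set K → Y → ℝ := fun B y =>
    if y ∈ A then (μ (q y)).m {s : ↥(MulAction.stabilizer K (q y).out) | t y * (s : K) ∈ B}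
    else 0 with hFdef
  have hF0 : ∀ (B : Set K) (y : Y), 0 ≤ F B y := by
    intro B y
    simp only [hFdef]
    split
    · exact (μ (q y)).nonneg _
    · exact le_refl 0
  have hF1 : ∀ (B : Set K) (y : Y), F B y ≤ 1 := by
    intro B y
    simp only [hFdef]
    split
    · exact Mean.le_one _ _
    · norm_num
  have hFuniv : ∀ y : Y, F Set.univ y = if y ∈ A then (1:ℝ) else 0 := by
    intro y
    simp only [hFdef]
    split
    · rw [show {s : ↥(MulAction.stabilizer K (q y).out) | t y * (s : K) ∈ Set.univ}
        = Set.univ by ext s; simp]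
      exact (μ (q y)).total
    · rfl
  have hFadd : ∀ (B C : Set K), Disjoint B C → ∀ y : Y, F (B ∪ C) y = F B y + F C y := by
    intro B C hd y
    simp only [hFdef]
    split
    · rw [show {s : ↥(MulAction.stabilizer K (q y).out) | t y * (s : K) ∈ B ∪ C}
        = {s : ↥(MulAction.stabilizer K (q y).out) | t y * (s : K) ∈ B}
          ∪ {s : ↥(MulAction.stabilizer K (q y).out) | t y * (s : K) ∈ C} by
        ext s; simp [Set.mem_union]]
      refine (μ (q y)).fin_add _ _ ?_
      rw [Set.disjoint_left]
      intro s hs1 hs2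
      exact (Set.disjoint_left.mp hd hs1) hs2
    · norm_num
  -- Step 5: equivariance of F
  have hFinv : ∀ (g : K) (B : Set K) (y : Y),
      F ((fun x => g * x) '' B) y = F B (g⁻¹ • y) := by
    intro g B y
    by_cases hy : y ∈ A
    · have hy' : g⁻¹ • y ∈ A := hAinv g⁻¹ y hy
      have hq' : q (g⁻¹ • y) = q y := hq_smul g⁻¹ y
      simp only [hFdef, if_pos hy, if_pos hy']
      rw [hq']
      have hz : t y • (q y).out = y := htt y
      have hz' : t (g⁻¹ • y) • (q y).out = g⁻¹ • y := by
        have := htt (g⁻¹ • y); rwa [hq'] at this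
      have hh0 : ((t (g⁻¹ • y))⁻¹ * g⁻¹ * t y) • (q y).out = (q y).out := by
        rw [mul_smul, mul_smul, hz]
        have h2 := congrArg (fun w => (t (g⁻¹ • y))⁻¹ • w) hz'
        simp only [inv_smul_smul] at h2
        exact h2.symm
      set h₀ : ↥(MulAction.stabilizer K (q y).out) :=
        ⟨(t (g⁻¹ • y))⁻¹ * g⁻¹ * t y, MulAction.mem_stabilizer_iff.mpr hh0⟩ with hh₀def
      have hset : {s : ↥(MulAction.stabilizer K (q y).out) |
            t y * (s : K) ∈ (fun x => g * x) '' B}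
          = (fun s => h₀⁻¹ * s) ''
            {s : ↥(MulAction.stabilizer K (q y).out) | t (g⁻¹ • y) * (s : K) ∈ B} := by
        ext s
        simp only [Set.mem_setOf_eq, Set.mem_image]
        constructor
        · rintro ⟨b, hb, hgb⟩
          refine ⟨h₀ * s, ?_, by rw [← mul_assoc, inv_mul_cancel, one_mul]⟩
          show t (g⁻¹ • y) * ((h₀ * s : ↥(MulAction.stabilizer K (q y).out)) : K) ∈ B
          have hcoe : ((h₀ * s : ↥(MulAction.stabilizer K (q y).out)) : K)
              = (t (g⁻¹ • y))⁻¹ * g⁻¹ * t y * (s : K) := rfl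
          rw [hcoe]
          have hcalc : t (g⁻¹ • y) * ((t (g⁻¹ • y))⁻¹ * g⁻¹ * t y * (s : K))
              = g⁻¹ * (t y * (s : K)) := by group
          rw [hcalc, ← hgb]
          simpa [← mul_assoc] using hb
        · rintro ⟨s', hs', rfl⟩
          refine ⟨t (g⁻¹ • y) * (s' : K), hs', ?_⟩
          have hcoe : ((h₀⁻¹ * s' : ↥(MulAction.stabilizer K (q y).out)) : K)
              = ((t (g⁻¹ • y))⁻¹ * g⁻¹ * t y)⁻¹ * (s' : K) := rfl
          rw [hcoe]
          group
      rw [hset, hμ (q y) (hrepA y hy) h₀⁻¹]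
    · have hy' : g⁻¹ • y ∉ A := by
        intro h
        exact hy (by have := hAinv g (g⁻¹ • y) h; rwa [smul_inv_smul] at this)
      simp only [hFdef, if_neg hy, if_neg hy']
  -- Step 6: assemble the mean on K
  refine ⟨⟨fun B => m₁.intgr (F B), fun B => m₁.intgr_nonneg (hF1 B), ?_, ?_⟩, ?_⟩
  · show m₁.intgr (F Set.univ) = 1
    rw [funext hFuniv, m₁.intgr_indicator A, hm₁A]
  · intro B C hd
    show m₁.intgr (F (B ∪ C)) = m₁.intgr (F B) + m₁.intgr (F C)
    rw [show F (B ∪ C) = fun y => F B y + F C y from funext (hFadd B C hd)]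
    exact m₁.intgr_add (hF0 B) (hF0 C)
      (fun y => by rw [← hFadd B C hd y]; exact hF1 _ y)
  · intro g B
    show m₁.intgr (F ((fun x => g * x) '' B)) = m₁.intgr (F B)
    rw [show F ((fun x => g * x) '' B) = fun y => F B (g⁻¹ • y) from funext (hFinv g B)]
    exact m₁.intgr_comp (fun y => g⁻¹ • y)
      (fun y => ⟨g • y, by simp⟩) (fun S => hm₁ g⁻¹ S) (F B)

end Aux

section Main

variable {G : Type*} [Group G]

lemma conj_hom_injective (g : G) :
    Function.Injective ⇑(MulAut.conj g).toMonoidHom :=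
  (MulAut.conj g).injective

lemma conj_comp_eq (g k : G) :
    ((MulAut.conj g).toMonoidHom.comp (MulAut.conj k).toMonoidHom : G →* G)
      = (MulAut.conj (g * k)).toMonoidHom := by
  ext z
  simp [MulAut.conj_apply]

lemma finite_coe_map_conj_iff (g : G) (K : Subgroup G) :
    ((Subgroup.map (MulAut.conj g).toMonoidHom K : Subgroup G) : Set G).Finite ↔
      ((K : Set G)).Finite := by
  rw [Subgroup.coe_map]
  constructor
  · intro h
    exact Set.Finite.of_finite_image h ((conj_hom_injective g).injOn)
  · intro h
    exact h.image _

lemma inf_stab_conj {X : Type*} [MulAction G X] (g : G) (x y : X) :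
    MulAction.stabilizer G (g • x) ⊓ MulAction.stabilizer G (g • y)
      = Subgroup.map (MulAut.conj g).toMonoidHom
          (MulAction.stabilizer G x ⊓ MulAction.stabilizer G y) := by
  rw [Subgroup.map_inf _ _ _ (conj_hom_injective g),
    ← MulAction.stabilizer_smul_eq_stabilizer_map_conj g x,
    ← MulAction.stabilizer_smul_eq_stabilizer_map_conj g y]

end Main

/-- Lemma: for a transitive amenable action of a nonamenable group `G` with stabilizer
`H = G_x`, the set `Q(H) = {g : H ∩ gHg⁻¹ infinite}` is thick in `G`. -/
theorem Q_stabilizer_thick {G : Type*} [Group G] [Countable G]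
    (hG : ¬ AmenableGroup G) {X : Type*} [MulAction G X] [MulAction.IsPretransitive G X]
    (hamen : AmenableAction G X) (x : X) :
    ∀ F : Finset G,
      (⋂ g ∈ F, (fun h => g * h) ''
        {k : G | ((MulAction.stabilizer G x ⊓
            Subgroup.map (MulAut.conj k).toMonoidHom (MulAction.stabilizer G x) :
              Subgroup G) : Set G).Infinite}).Nonempty := by
  classical
  intro F
  set H := MulAction.stabilizer G x with hHdef
  by_contra hne
  rw [Set.not_nonempty_iff_eq_empty] at hne
  obtain ⟨mm, hmm⟩ := hamen
  -- from emptiness, every point is "bad" for some g ∈ F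
  have h_all : ∀ h : G, ∃ g ∈ F,
      ((H ⊓ Subgroup.map (MulAut.conj (g⁻¹ * h)).toMonoidHom H : Subgroup G) : Set G).Finite := by
    intro h
    have hmem : h ∉ (⋂ g ∈ F, (fun k => g * k) ''
        {k : G | ((H ⊓ Subgroup.map (MulAut.conj k).toMonoidHom H : Subgroup G) :
          Set G).Infinite}) := by
      rw [hne]; exact Set.notMem_empty h
    simp only [Set.mem_iInter, not_forall] at hmem
    obtain ⟨g, hgF, hnot⟩ := hmem
    refine ⟨g, hgF, ?_⟩
    rw [← Set.not_infinite]
    intro hinf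
    exact hnot (⟨g⁻¹ * h, hinf, by group⟩)
  -- the covering sets
  set 𝒜 : G → Set X := fun g => {y : X |
    ((MulAction.stabilizer G (g • x) ⊓ MulAction.stabilizer G y : Subgroup G) :
      Set G).Finite} with h𝒜def
  have hcover : (Set.univ : Set X) ⊆ ⋃ g ∈ F, 𝒜 g := by
    intro y _
    obtain ⟨h, hh⟩ := MulAction.exists_smul_eq G x y
    obtain ⟨g, hgF, hfin⟩ := h_all h
    refine Set.mem_biUnion hgF ?_
    show ((MulAction.stabilizer G (g • x) ⊓ MulAction.stabilizer G y : Subgroup G) :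
      Set G).Finite
    rw [← hh]
    have key : MulAction.stabilizer G (g • x) ⊓ MulAction.stabilizer G (h • x)
        = Subgroup.map (MulAut.conj g).toMonoidHom
            (H ⊓ Subgroup.map (MulAut.conj (g⁻¹ * h)).toMonoidHom H) := by
      rw [Subgroup.map_inf _ _ _ (conj_hom_injective g)]
      rw [MulAction.stabilizer_smul_eq_stabilizer_map_conj g x,
        MulAction.stabilizer_smul_eq_stabilizer_map_conj h x]
      congr 1
      rw [← hHdef]
      rw [Subgroup.map_map, conj_comp_eq g (g⁻¹ * h)]
      congr 2
      group
    rw [key, finite_coe_map_conj_iff]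
    exact hfin
  -- find g ∈ F with positive measure
  have hmean_pos : ∃ g ∈ F, 0 < mm.m (𝒜 g) := by
    by_contra hneg
    push_neg at hneg
    have h1 : mm.m (⋃ g ∈ F, 𝒜 g) ≤ ∑ g ∈ F, mm.m (𝒜 g) := mm.biUnion_le F 𝒜
    have h2 : ∑ g ∈ F, mm.m (𝒜 g) ≤ 0 := Finset.sum_nonpos fun g hg => hneg g hg
    have h3 : mm.m Set.univ ≤ mm.m (⋃ g ∈ F, 𝒜 g) := mm.mono hcover
    rw [mm.total] at h3
    linarith
  obtain ⟨g, hgF, hpos⟩ := hmean_pos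
  -- translate to the base point
  set A' : Set X := {y : X |
    ((H ⊓ MulAction.stabilizer G y : Subgroup G) : Set G).Finite} with hA'def
  have himg : (fun y : X => g⁻¹ • y) '' (𝒜 g) = A' := by
    ext y
    constructor
    · rintro ⟨z, hz, rfl⟩
      show ((H ⊓ MulAction.stabilizer G (g⁻¹ • z) : Subgroup G) : Set G).Finite
      rw [← finite_coe_map_conj_iff g, ← inf_stab_conj g x (g⁻¹ • z), smul_inv_smul]
      exact hz
    · intro hy
      refine ⟨g • y, ?_, by simp⟩
      show ((MulAction.stabilizer G (g • x) ⊓ MulAction.stabilizer G (g • y) : Subgroup G) :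
        Set G).Finite
      rw [inf_stab_conj g x y, finite_coe_map_conj_iff]
      exact hy
  have hA'pos : 0 < mm.m A' := by
    rw [← himg, hmm g⁻¹ (𝒜 g)]
    exact hpos
  -- A' is H-invariant
  have hA'inv : ∀ (s : ↥H) (y : X), y ∈ A' → s • y ∈ A' := by
    intro s y hy
    show ((H ⊓ MulAction.stabilizer G ((s : G) • y) : Subgroup G) : Set G).Finite
    have hs : (s : G) • x = x := s.2
    have key : H ⊓ MulAction.stabilizer G ((s : G) • y)
        = Subgroup.map (MulAut.conj (s : G)).toMonoidHom (H ⊓ MulAction.stabilizer G y) := by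
      have := inf_stab_conj (s : G) x y
      rwa [hs, ← hHdef] at this
    rw [key, finite_coe_map_conj_iff]
    exact hy
  -- stabilizers of points of A' in H are finite
  have hstabH : ∀ y ∈ A', AmenableGroup ↥(MulAction.stabilizer ↥H y) := by
    intro y hy
    haveI : Finite ↥(H ⊓ MulAction.stabilizer G y : Subgroup G) := hy.to_subtype
    have hinj : Function.Injective
        (fun s : ↥(MulAction.stabilizer ↥H y) =>
          (⟨((s : ↥H) : G), ⟨(s : ↥H).2, s.2⟩⟩ :
            ↥(H ⊓ MulAction.stabilizer G y : Subgroup G))) := by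
      intro s s' hss
      simp only [Subtype.mk.injEq] at hss
      have h2 := congrArg Subtype.val hss
      exact Subtype.ext (Subtype.ext h2)
    haveI : Finite ↥(MulAction.stabilizer ↥H y) := Finite.of_injective _ hinj
    exact amenableGroup_of_finite
  -- H is amenable
  have hmmH : MeanInvariant ↥H mm := fun s S => hmm (s : G) S
  have hHamen : AmenableGroup ↥H :=
    amenable_of_invariant_mean mm hmmH A' hA'inv hA'pos hstabH
  -- G is amenable: contradiction
  refine hG ?_
  refine amenable_of_invariant_mean mm hmm Set.univ (fun k y _ => trivial)
    (by rw [mm.total]; norm_num) ?_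
  intro y _
  obtain ⟨h, hh⟩ := MulAction.exists_smul_eq G x y
  rw [← hh, MulAction.stabilizer_smul_eq_stabilizer_map_conj h x]
  exact amenableGroup_of_mulEquiv
    (Subgroup.equivMapOfInjective H _ (conj_hom_injective h)) hHamen
end

section
/- Let G be a countable group acting on a set X, let S be a finite subset of G, let n ≥ 1 and ε > 0. Let P ⊆ X be an (S,ε)-invariant set which is contained in a single G-orbit and satisfies |P| ≥ n. Then P^{⊛n} is (S, nε)-invariant in X^{⊛n}. -/
open Pointwise

/-- `P` is an `(S,ε)`-invariant subset of the `G`-set `X`: a nonempty finite set with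
`Σ_{s ∈ S} |sP \\ P| < ε|P|`. -/
def SInvariant {G : Type*} [Group G] {X : Type*} [MulAction G X] (S : Finset G) (ε : ℝ)
    (P : Set X) : Prop :=
  P.Finite ∧ P.Nonempty ∧
    (∑ s ∈ S, (((s • P) \ P).ncard : ℝ)) < ε * (P.ncard : ℝ)

private lemma ncard_biUnion_le' {α ι : Type*} (t : Finset ι) (f : ι → Set α) :
    (⋃ i ∈ t, f i).ncard ≤ ∑ i ∈ t, (f i).ncard := by
  classical
  induction t using Finset.induction_on with
  | empty => simp
  | insert _ _ h ih =>
    rw [Finset.sum_insert h, Finset.set_biUnion_insert]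
    exact le_trans (Set.ncard_union_le _ _) (Nat.add_le_add_left ih _)

private lemma desc_eq' (m k : ℕ) (h : k + 1 ≤ m) :
    m.descFactorial (k + 1) = m * (m - 1).descFactorial k := by
  obtain ⟨m', rfl⟩ : ∃ m', m = m' + 1 := ⟨m - 1, by omega⟩
  rw [Nat.succ_descFactorial_succ]; simp

private lemma card_fiber_le' {X : Type*} (P : Set X) (hPfin : P.Finite) (k : ℕ)
    (i : Fin (k + 1)) (b : X) (hb : b ∈ P) :
    Nat.card {y : Fin (k + 1) → X | (Function.Injective y ∧ ∀ j, y j ∈ P) ∧ y i = b} ≤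
      (P.ncard - 1).descFactorial k := by
  classical
  have hfin : (P \ {b}).Finite := hPfin.diff
  haveI := hfin.fintype
  have hcard : Fintype.card ↥(P \ {b}) = P.ncard - 1 := by
    rw [← Nat.card_eq_fintype_card, Nat.card_coe_set_eq,
      Set.ncard_diff_singleton_of_mem hb]
  set A := {y : Fin (k + 1) → X | (Function.Injective y ∧ ∀ j, y j ∈ P) ∧ y i = b} with hA
  let f : A → (Fin k ↪ ↥(P \ {b})) := fun y =>
    ⟨fun j => ⟨y.1 (i.succAbove j), y.2.1.2 _, by
        simp only [Set.mem_singleton_iff]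
        intro hEq
        exact Fin.succAbove_ne i j (y.2.1.1 (hEq.trans y.2.2.symm))⟩,
      fun j1 j2 h => Fin.succAbove_right_injective (y.2.1.1 (congrArg Subtype.val h))⟩
  have hinj : Function.Injective f := by
    intro y1 y2 h
    apply Subtype.ext
    funext j
    rcases eq_or_ne j i with rfl | hne
    · rw [y1.2.2, y2.2.2]
    · obtain ⟨z, rfl⟩ := Fin.exists_succAbove_eq hne
      exact congrArg Subtype.val (congrFun (congrArg (fun e => e.toFun) h) z)
  calc Nat.card A ≤ Nat.card (Fin k ↪ ↥(P \ {b})) := Nat.card_le_card_of_injective f hinj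
    _ = (P.ncard - 1).descFactorial k := by
        rw [Nat.card_eq_fintype_card, Fintype.card_embedding_eq, Fintype.card_fin, hcard]


/-- Lemma: if `P ⊆ X` is `(S,ε)`-invariant, lies in a single `G`-orbit and `|P| ≥ n`, then
`P^{⊛n}` (the distinct `n`-tuples from `P`, inside `X^{⊛n}`, with the diagonal action) is
`(S, nε)`-invariant. -/
theorem diag_tuples_invariant {G : Type*} [Group G] [Countable G] {X : Type*}
    [MulAction G X] (S : Finset G) (n : ℕ) (hn : 1 ≤ n) (ε : ℝ) (hε : 0 < ε)
    (P : Set X) (hP : SInvariant S ε P)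
    (horb : ∀ x ∈ P, ∀ y ∈ P, MulAction.orbit G x = MulAction.orbit G y)
    (hcard : n ≤ P.ncard) :
    SInvariant S ((n : ℝ) * ε)
      {x : Fin n → X | (∀ i j, i ≠ j → x i ≠ x j) ∧
        (∀ i j, MulAction.orbit G (x i) = MulAction.orbit G (x j)) ∧
        ∀ i, x i ∈ P} := by
  classical
  obtain ⟨hPfin, hPne, hPsum⟩ := hP
  obtain ⟨k, rfl⟩ : ∃ k, n = k + 1 := ⟨n - 1, (Nat.succ_pred_eq_of_pos hn).symm⟩
  have hset : {x : Fin (k + 1) → X | (∀ i j, i ≠ j → x i ≠ x j) ∧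
        (∀ i j, MulAction.orbit G (x i) = MulAction.orbit G (x j)) ∧ ∀ i, x i ∈ P}
      = {x : Fin (k + 1) → X | Function.Injective x ∧ ∀ i, x i ∈ P} := by
    ext x
    constructor
    · rintro ⟨h1, -, h3⟩
      exact ⟨fun i j hxy => by by_contra hij; exact h1 i j hij hxy, h3⟩
    · rintro ⟨hinj, hmem⟩
      exact ⟨fun i j hij hxy => hij (hinj hxy), fun i j => horb _ (hmem i) _ (hmem j), hmem⟩
  rw [hset]
  set Q := {x : Fin (k + 1) → X | Function.Injective x ∧ ∀ i, x i ∈ P} with hQ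
  have hQfin : Q.Finite :=
    (Set.Finite.pi fun _ : Fin (k + 1) => hPfin).subset fun x hx i _ => hx.2 i
  set D := (P.ncard - 1).descFactorial k with hD
  have hD1 : 1 ≤ D :=
    Nat.pos_of_ne_zero fun h =>
      absurd (Nat.descFactorial_eq_zero_iff_lt.mp h) (by omega)
  haveI := hPfin.fintype
  have hcardP : Fintype.card ↥P = P.ncard := by
    rw [← Nat.card_eq_fintype_card, Nat.card_coe_set_eq]
  -- cardinality of Q
  have hQcard : Q.ncard = P.ncard * D := by
    have e : ↥Q ≃ (Fin (k + 1) ↪ ↥P) :=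
      { toFun := fun x => ⟨fun i => ⟨x.1 i, x.2.2 i⟩,
          fun i j h => x.2.1 (congrArg Subtype.val h)⟩
        invFun := fun f => ⟨fun i => (f i : X),
          fun i j h => f.injective (Subtype.ext h), fun i => (f i).2⟩
        left_inv := fun x => rfl
        right_inv := fun f => rfl }
    have h1 : Q.ncard = Nat.card ↥Q := (Nat.card_coe_set_eq _).symm
    rw [h1, Nat.card_congr e, Nat.card_eq_fintype_card, Fintype.card_embedding_eq,
      Fintype.card_fin, hcardP, desc_eq' _ _ hcard, hD]
  have hQne : Q.Nonempty := by
    rw [← Set.ncard_pos hQfin, hQcard]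
    exact Nat.mul_pos (by omega) hD1
  refine ⟨hQfin, hQne, ?_⟩
  -- key bound for each s
  have key : ∀ s : G, (((s • Q) \ Q).ncard : ℝ) ≤ (k + 1) * ((s • P) \ P).ncard * D := by
    intro s
    set T := (s • P) \ P with hT
    have hTfin : T.Finite := (hPfin.smul_set).diff
    -- per fiber bound
    have fiber : ∀ (i : Fin (k + 1)) (a : X), a ∈ T →
        {x ∈ s • Q | x i = a}.ncard ≤ D := by
      intro i a ha
      have hb : s⁻¹ • a ∈ P := by
        have := ha.1
        rwa [← Set.mem_smul_set_iff_inv_smul_mem]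
      have hbi : Function.Injective fun x : ↥{x ∈ s • Q | x i = a} =>
          (⟨s⁻¹ • (x : Fin (k + 1) → X), by
            obtain ⟨hx1, hx2⟩ := x.2
            have hxQ : s⁻¹ • (x : Fin (k + 1) → X) ∈ Q :=
              Set.mem_smul_set_iff_inv_smul_mem.mp hx1
            exact ⟨hxQ, by rw [Pi.smul_apply, hx2]⟩⟩ :
          ↥{y : Fin (k + 1) → X | (Function.Injective y ∧ ∀ j, y j ∈ P) ∧ y i = s⁻¹ • a}) := by
        intro x1 x2 h
        apply Subtype.ext
        have := congrArg Subtype.val h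
        simpa using congrArg (fun z => s • z) this
      have hfinT : ({y : Fin (k + 1) → X |
          (Function.Injective y ∧ ∀ j, y j ∈ P) ∧ y i = s⁻¹ • a}).Finite :=
        hQfin.subset fun y hy => hy.1
      haveI := hfinT.to_subtype
      calc {x ∈ s • Q | x i = a}.ncard
          = Nat.card ↥{x ∈ s • Q | x i = a} := (Nat.card_coe_set_eq _).symm
        _ ≤ Nat.card ↥{y : Fin (k + 1) → X |
              (Function.Injective y ∧ ∀ j, y j ∈ P) ∧ y i = s⁻¹ • a} :=
            Nat.card_le_card_of_injective _ hbi
        _ ≤ D := card_fiber_le' P hPfin k i _ hb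
    -- cover
    have hcover : (s • Q) \ Q ⊆
        ⋃ i ∈ (Finset.univ : Finset (Fin (k + 1))), ⋃ a ∈ hTfin.toFinset,
          {x ∈ s • Q | x i = a} := by
      rintro x ⟨hxs, hxn⟩
      obtain ⟨y, hy, rfl⟩ := hxs
      have hinj : Function.Injective (s • y) := fun i j h => by
        apply hy.1
        have : s • y i = s • y j := h
        exact smul_left_cancel s this
      have : ∃ i, (s • y) i ∉ P := by
        by_contra hc
        push_neg at hc
        exact hxn ⟨hinj, hc⟩
      obtain ⟨i, hi⟩ := this
      have hiT : (s • y) i ∈ T := ⟨⟨y i, hy.2 i, rfl⟩, hi⟩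
      refine Set.mem_biUnion (Finset.mem_univ i) ?_
      refine Set.mem_biUnion (hTfin.mem_toFinset.mpr hiT) ?_
      exact ⟨⟨y, hy, rfl⟩, rfl⟩
    have hfinU : (⋃ i ∈ (Finset.univ : Finset (Fin (k + 1))), ⋃ a ∈ hTfin.toFinset,
        {x ∈ s • Q | x i = a}).Finite := by
      apply Set.Finite.biUnion (Finset.finite_toSet _)
      intro i _
      apply Set.Finite.biUnion (Finset.finite_toSet _)
      intro a _
      exact (hQfin.smul_set).subset fun x hx => hx.1
    have hnat : ((s • Q) \ Q).ncard ≤ (k + 1) * T.ncard * D := by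
      calc ((s • Q) \ Q).ncard
          ≤ (⋃ i ∈ (Finset.univ : Finset (Fin (k + 1))), ⋃ a ∈ hTfin.toFinset,
              {x ∈ s • Q | x i = a}).ncard := Set.ncard_le_ncard hcover hfinU
        _ ≤ ∑ i ∈ (Finset.univ : Finset (Fin (k + 1))),
              (⋃ a ∈ hTfin.toFinset, {x ∈ s • Q | x i = a}).ncard :=
            ncard_biUnion_le' _ _
        _ ≤ ∑ i ∈ (Finset.univ : Finset (Fin (k + 1))), ∑ a ∈ hTfin.toFinset,
              ({x ∈ s • Q | x i = a}).ncard :=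
            Finset.sum_le_sum fun i _ => ncard_biUnion_le' _ _
        _ ≤ ∑ _i ∈ (Finset.univ : Finset (Fin (k + 1))), ∑ _a ∈ hTfin.toFinset, D := by
            refine Finset.sum_le_sum fun i _ => Finset.sum_le_sum fun a haf => ?_
            exact fiber i a (hTfin.mem_toFinset.mp haf)
        _ = (k + 1) * T.ncard * D := by
            rw [Finset.sum_const, Finset.sum_const, smul_eq_mul, smul_eq_mul,
              Finset.card_univ, Fintype.card_fin, Set.ncard_eq_toFinset_card T hTfin,
              mul_assoc]
    exact_mod_cast hnat
  have hkD : (0 : ℝ) < ((k : ℝ) + 1) * (D : ℕ) := by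
    have h1 : (0 : ℝ) < (k : ℝ) + 1 := by positivity
    have h2 : (0 : ℝ) < (D : ℝ) := by exact_mod_cast hD1
    exact mul_pos h1 h2
  calc ∑ s ∈ S, ((((s • Q) \ Q).ncard : ℕ) : ℝ)
      ≤ ∑ s ∈ S, ((k : ℝ) + 1) * ((s • P) \ P).ncard * D := by
        refine Finset.sum_le_sum fun s _ => ?_
        have := key s
        push_cast at this ⊢
        linarith
    _ = ((k : ℝ) + 1) * D * ∑ s ∈ S, ((((s • P) \ P).ncard : ℕ) : ℝ) := by
        rw [Finset.mul_sum]
        exact Finset.sum_congr rfl fun s _ => by ring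
    _ < ((k : ℝ) + 1) * D * (ε * P.ncard) := by
        exact mul_lt_mul_of_pos_left hPsum hkD
    _ = ((k + 1 : ℕ) : ℝ) * ε * (Q.ncard : ℝ) := by
        rw [hQcard]
        push_cast
        ring
end

section
/- Let G be a countable group, H ≤ G a subgroup, m a mean on G invariant under conjugation by H, and A ⊆ ℓ^∞(G) a separable (in the supremum norm) subalgebra. Then there exists a sequence (p_n)_{n∈ℕ} of probability vectors on G such that ‖h p_n h⁻¹ − p_n‖₁ → 0 for all h ∈ H, and Σ_{g∈G} p_n(g)φ(g) → m(φ) for all φ ∈ A. -/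
open Pointwise

/-- The integral of a (bounded) function against a mean: the value of the unique positive
unital linear functional on bounded functions extending `m`, realized as the supremum of
the integrals of simple functions dominated by `f`. -/
noncomputable def Mean.integral {X : Type*} (m : Mean X) (f : X → ℝ) : ℝ :=
  sSup {r : ℝ | ∃ g : X → ℝ, (Set.range g).Finite ∧ (∀ x, g x ≤ f x) ∧
    r = ∑ᶠ y : ℝ, y * m.m (g ⁻¹' {y})}

namespace MazurAux

variable {X : Type*} (m : Mean X)

lemma m_empty : m.m ∅ = 0 := by
  have := m.fin_add ∅ ∅ (by simp)
  simp at this; linarith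

lemma m_mono {A B : Set X} (h : A ⊆ B) : m.m A ≤ m.m B := by
  have : m.m (A ∪ (B \ A)) = m.m A + m.m (B \ A) :=
    m.fin_add _ _ (Set.disjoint_sdiff_right.mono_left le_rfl)
  rw [Set.union_diff_cancel h] at this
  have := m.nonneg (B \ A)
  linarith

/-- partition additivity over a Finset of pairwise disjoint sets -/
lemma m_biUnion {ι : Type*} (s : Finset ι) (A : ι → Set X)
    (hdisj : ∀ i ∈ s, ∀ j ∈ s, i ≠ j → Disjoint (A i) (A j)) :
    m.m (⋃ i ∈ s, A i) = ∑ i ∈ s, m.m (A i) := by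
  classical
  induction s using Finset.induction with
  | empty => simp [m_empty]
  | @insert a s' hx ih =>
    rw [Finset.sum_insert hx]
    have hU : (⋃ i ∈ insert a s', A i) = A a ∪ ⋃ i ∈ s', A i := by
      simp [Set.biUnion_insert]
    rw [hU, m.fin_add _ _ ?_, ih ?_]
    · intro i hi j hj hij
      exact hdisj i (Finset.mem_insert_of_mem hi) j (Finset.mem_insert_of_mem hj) hij
    · rw [Set.disjoint_iff_inter_eq_empty]
      ext x
      simp only [Set.mem_inter_iff, Set.mem_iUnion, Set.mem_empty_iff_false, iff_false, not_and]
      rintro hxa ⟨i, hi, hxi⟩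
      have := hdisj a (Finset.mem_insert_self a s') i (Finset.mem_insert_of_mem hi)
        (by rintro rfl; exact hx hi)
      exact (Set.disjoint_iff_inter_eq_empty.mp this).subset ⟨hxa, hxi⟩ |>.elim

/-- decompose a set along the level sets of a simple function -/
lemma m_decomp (B : Set X) (g : X → ℝ) (T : Finset ℝ) (hT : ∀ x, g x ∈ T) :
    m.m B = ∑ y ∈ T, m.m (B ∩ g ⁻¹' {y}) := by
  classical
  have hB : B = ⋃ y ∈ T, B ∩ g ⁻¹' {y} := by
    ext x
    simp only [Set.mem_iUnion, Set.mem_inter_iff, Set.mem_preimage, Set.mem_singleton_iff]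
    constructor
    · intro hx; exact ⟨g x, hT x, hx, rfl⟩
    · rintro ⟨y, -, hx⟩; exact hx.1
  have hdisj : ∀ i ∈ T, ∀ j ∈ T, i ≠ j → Disjoint (B ∩ g ⁻¹' {i}) (B ∩ g ⁻¹' {j}) := by
    intro i _ j _ hij
    refine Set.disjoint_left.mpr ?_
    rintro x ⟨-, hxi⟩ ⟨-, hxj⟩
    rw [Set.mem_preimage, Set.mem_singleton_iff] at hxi hxj
    exact hij (by rw [← hxi, ← hxj])
  calc m.m B = m.m (⋃ y ∈ T, B ∩ g ⁻¹' {y}) := by rw [← hB]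
    _ = ∑ y ∈ T, m.m (B ∩ g ⁻¹' {y}) := m_biUnion m T _ hdisj

/-- simple integral w.r.t. a finite set of values -/
noncomputable def SI (T : Finset ℝ) (g : X → ℝ) : ℝ := ∑ y ∈ T, y * m.m (g ⁻¹' {y})

lemma preimage_eq_empty_of_not_mem {g : X → ℝ} {T : Finset ℝ} (hT : ∀ x, g x ∈ T)
    {y : ℝ} (hy : y ∉ T) : g ⁻¹' {y} = ∅ := by
  ext x; simp only [Set.mem_preimage, Set.mem_singleton_iff, Set.mem_empty_iff_false, iff_false]
  rintro rfl; exact hy (hT x)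

lemma SI_congr {g : X → ℝ} {T T' : Finset ℝ} (hT : ∀ x, g x ∈ T) (hT' : ∀ x, g x ∈ T') :
    SI m T g = SI m T' g := by
  classical
  have key : ∀ (S S' : Finset ℝ), S ⊆ S' → (∀ x, g x ∈ S) → SI m S g = SI m S' g := by
    intro S S' hSS hS
    refine (Finset.sum_subset hSS ?_)
    intro y _ hy
    rw [preimage_eq_empty_of_not_mem hS hy, m_empty]; ring
  rw [key T (T ∪ T') Finset.subset_union_left hT,
    key T' (T ∪ T') Finset.subset_union_right hT']

/-- master double-partition lemma -/
lemma SI_double (g g' : X → ℝ) (T T' W : Finset ℝ) (u : ℝ → ℝ → ℝ)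
    (hT : ∀ x, g x ∈ T) (hT' : ∀ x, g' x ∈ T') (hW : ∀ x, u (g x) (g' x) ∈ W) :
    SI m W (fun x => u (g x) (g' x)) =
      ∑ y ∈ T, ∑ z ∈ T', u y z * m.m (g ⁻¹' {y} ∩ g' ⁻¹' {z}) := by
  classical
  unfold SI
  have step1 : ∀ w : ℝ, m.m ((fun x => u (g x) (g' x)) ⁻¹' {w}) =
      ∑ y ∈ T, ∑ z ∈ T', m.m ((fun x => u (g x) (g' x)) ⁻¹' {w} ∩ (g ⁻¹' {y} ∩ g' ⁻¹' {z})) := by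
    intro w
    rw [m_decomp m _ g T hT]
    refine Finset.sum_congr rfl fun y _ => ?_
    rw [m_decomp m _ g' T' hT']
    refine Finset.sum_congr rfl fun z _ => ?_
    congr 1
    ext x
    simp only [Set.mem_inter_iff, Set.mem_preimage, Set.mem_singleton_iff]
    tauto
  calc ∑ w ∈ W, w * m.m ((fun x => u (g x) (g' x)) ⁻¹' {w})
      = ∑ w ∈ W, ∑ y ∈ T, ∑ z ∈ T',
          w * m.m ((fun x => u (g x) (g' x)) ⁻¹' {w} ∩ (g ⁻¹' {y} ∩ g' ⁻¹' {z})) := by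
        refine Finset.sum_congr rfl fun w _ => ?_
        rw [step1 w, Finset.mul_sum]
        refine Finset.sum_congr rfl fun y _ => ?_
        rw [Finset.mul_sum]
    _ = ∑ y ∈ T, ∑ z ∈ T', ∑ w ∈ W,
          w * m.m ((fun x => u (g x) (g' x)) ⁻¹' {w} ∩ (g ⁻¹' {y} ∩ g' ⁻¹' {z})) := by
        rw [Finset.sum_comm]
        refine Finset.sum_congr rfl fun y _ => Finset.sum_comm
    _ = ∑ y ∈ T, ∑ z ∈ T', u y z * m.m (g ⁻¹' {y} ∩ g' ⁻¹' {z}) := by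
        refine Finset.sum_congr rfl fun y _ => Finset.sum_congr rfl fun z _ => ?_
        have hcell : ∀ w, (fun x => u (g x) (g' x)) ⁻¹' {w} ∩ (g ⁻¹' {y} ∩ g' ⁻¹' {z}) =
            if u y z = w then g ⁻¹' {y} ∩ g' ⁻¹' {z} else ∅ := by
          intro w
          split_ifs with h
          · ext x
            simp only [Set.mem_inter_iff, Set.mem_preimage, Set.mem_singleton_iff]
            constructor
            · rintro ⟨_, h2⟩; exact h2
            · rintro ⟨rfl, rfl⟩; exact ⟨h, rfl, rfl⟩
          · ext x
            simp only [Set.mem_inter_iff, Set.mem_preimage, Set.mem_singleton_iff,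
              Set.mem_empty_iff_false, iff_false, not_and]
            rintro h1 rfl rfl
            exact h h1
        simp_rw [hcell]
        by_cases hmem : u y z ∈ W
        · rw [Finset.sum_congr rfl (fun w _ => ?_)]
          · rw [Finset.sum_ite_eq' W (u y z) (fun w => w * m.m (g ⁻¹' {y} ∩ g' ⁻¹' {z}))]
            simp [hmem]
          · rw [apply_ite m.m, apply_ite (w * ·), m_empty, mul_zero]
            by_cases h : u y z = w
            · subst h; simp
            · rw [if_neg h, if_neg (fun hh => h hh.symm)]
        · have hempty : g ⁻¹' {y} ∩ g' ⁻¹' {z} = ∅ := by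
            ext x
            simp only [Set.mem_inter_iff, Set.mem_preimage, Set.mem_singleton_iff,
              Set.mem_empty_iff_false, iff_false, not_and]
            rintro rfl rfl
            exact hmem (hW x)
          simp [hempty, m_empty]

end MazurAux

namespace MazurAux2
open MazurAux
variable {X : Type*} (m : Mean X)

lemma SI_mono {g g' : X → ℝ} {T T' : Finset ℝ} (hT : ∀ x, g x ∈ T) (hT' : ∀ x, g' x ∈ T')
    (hle : ∀ x, g x ≤ g' x) : SI m T g ≤ SI m T' g' := by
  have h1 : SI m T g = ∑ y ∈ T, ∑ z ∈ T', y * m.m (g ⁻¹' {y} ∩ g' ⁻¹' {z}) :=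
    SI_double m g g' T T' T (fun y z => y) hT hT' hT
  have h2 : SI m T' g' = ∑ y ∈ T, ∑ z ∈ T', z * m.m (g ⁻¹' {y} ∩ g' ⁻¹' {z}) := by
    have := SI_double m g' g T' T T' (fun y z => y) hT' hT hT'
    rw [this, Finset.sum_comm]
    refine Finset.sum_congr rfl fun y _ => Finset.sum_congr rfl fun z _ => by
      rw [Set.inter_comm]
  rw [h1, h2]
  refine Finset.sum_le_sum fun y _ => Finset.sum_le_sum fun z _ => ?_
  by_cases hc : (g ⁻¹' {y} ∩ g' ⁻¹' {z}) = ∅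
  · simp [hc, m_empty]
  · obtain ⟨x, hx1, hx2⟩ := Set.nonempty_iff_ne_empty.mpr hc
    rw [Set.mem_preimage, Set.mem_singleton_iff] at hx1
    rw [Set.mem_preimage, Set.mem_singleton_iff] at hx2
    have : y ≤ z := by rw [← hx1, ← hx2]; exact hle x
    exact mul_le_mul_of_nonneg_right this (m.nonneg _)

lemma SI_add {g g' : X → ℝ} {T T' W : Finset ℝ} (hT : ∀ x, g x ∈ T) (hT' : ∀ x, g' x ∈ T')
    (hW : ∀ x, g x + g' x ∈ W) :
    SI m W (fun x => g x + g' x) = SI m T g + SI m T' g' := by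
  have h0 := SI_double m g g' T T' W (fun y z => y + z) hT hT' hW
  have h1 : SI m T g = ∑ y ∈ T, ∑ z ∈ T', y * m.m (g ⁻¹' {y} ∩ g' ⁻¹' {z}) :=
    SI_double m g g' T T' T (fun y z => y) hT hT' hT
  have h2 : SI m T' g' = ∑ y ∈ T, ∑ z ∈ T', z * m.m (g ⁻¹' {y} ∩ g' ⁻¹' {z}) := by
    have := SI_double m g' g T' T T' (fun y z => y) hT' hT hT'
    rw [this, Finset.sum_comm]
    refine Finset.sum_congr rfl fun y _ => Finset.sum_congr rfl fun z _ => by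
      rw [Set.inter_comm]
  rw [h0, h1, h2, ← Finset.sum_add_distrib]
  refine Finset.sum_congr rfl fun y _ => ?_
  rw [← Finset.sum_add_distrib]
  exact Finset.sum_congr rfl fun z _ => by ring

lemma SI_const (c : ℝ) : SI m {c} (fun _ : X => c) = c := by
  unfold SI
  rw [Finset.sum_singleton]
  have : (fun _ : X => c) ⁻¹' {c} = Set.univ := by
    ext x; simp
  rw [this, m.total, mul_one]

lemma SI_smul {c : ℝ} (hc : c ≠ 0) (g : X → ℝ) (T : Finset ℝ) :
    SI m (T.image (fun y => c * y)) (fun x => c * g x) = c * SI m T g := by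
  unfold SI
  rw [Finset.sum_image (by intro a _ b _ h; exact mul_left_cancel₀ hc h), Finset.mul_sum]
  refine Finset.sum_congr rfl fun y _ => ?_
  have : (fun x => c * g x) ⁻¹' {c * y} = g ⁻¹' {y} := by
    ext x
    simp only [Set.mem_preimage, Set.mem_singleton_iff]
    exact ⟨fun h => mul_left_cancel₀ hc h, fun h => by rw [h]⟩
  rw [this]; ring

end MazurAux2

namespace MazurAux3
open MazurAux MazurAux2
variable {X : Type*} (m : Mean X)

def Sset (f : X → ℝ) : Set ℝ :=
  {r : ℝ | ∃ g : X → ℝ, (Set.range g).Finite ∧ (∀ x, g x ≤ f x) ∧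
    r = ∑ᶠ y : ℝ, y * m.m (g ⁻¹' {y})}

lemma X_nonempty (m : Mean X) : Nonempty X := by
  by_contra h
  have huniv : (Set.univ : Set X) = ∅ := by
    ext x; exact iff_of_false (fun _ => h ⟨x⟩) (fun hx => hx)
  have := m.total
  rw [huniv, m_empty] at this
  linarith

lemma integral_eq_sSup (f : X → ℝ) : m.integral f = sSup (Sset m f) := rfl

lemma finsum_eq_SI (g : X → ℝ) (T : Finset ℝ) (hT : ∀ x, g x ∈ T) :
    ∑ᶠ y : ℝ, y * m.m (g ⁻¹' {y}) = SI m T g := by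
  refine finsum_eq_finset_sum_of_support_subset _ ?_
  intro y hy
  by_contra hyT
  simp only [Function.mem_support] at hy
  exact hy (by rw [preimage_eq_empty_of_not_mem hT hyT, m_empty, mul_zero])

lemma SI_mem_Sset {f g : X → ℝ} {T : Finset ℝ} (hT : ∀ x, g x ∈ T) (hle : ∀ x, g x ≤ f x) :
    SI m T g ∈ Sset m f :=
  ⟨g, Set.Finite.subset T.finite_toSet (by rintro _ ⟨x, rfl⟩; exact hT x), hle,
    (finsum_eq_SI m g T hT).symm⟩

lemma mem_Sset_iff {f : X → ℝ} {r : ℝ} :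
    r ∈ Sset m f ↔ ∃ (g : X → ℝ) (T : Finset ℝ), (∀ x, g x ∈ T) ∧ (∀ x, g x ≤ f x) ∧
      r = SI m T g := by
  constructor
  · rintro ⟨g, hfin, hle, rfl⟩
    classical
    exact ⟨g, hfin.toFinset, fun x => hfin.mem_toFinset.mpr (Set.mem_range_self x), hle,
      finsum_eq_SI m g _ (fun x => hfin.mem_toFinset.mpr (Set.mem_range_self x))⟩
  · rintro ⟨g, T, hT, hle, rfl⟩
    exact SI_mem_Sset m hT hle

lemma Sset_nonempty {f : X → ℝ} {c : ℝ} (hc : ∀ x, c ≤ f x) : (Sset m f).Nonempty :=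
  ⟨SI m {c} (fun _ => c), SI_mem_Sset m (fun _ => Finset.mem_singleton_self c) hc⟩

lemma Sset_bddAbove {f : X → ℝ} {C : ℝ} (hC : ∀ x, f x ≤ C) : BddAbove (Sset m f) := by
  refine ⟨C, fun r hr => ?_⟩
  obtain ⟨g, T, hT, hle, rfl⟩ := (mem_Sset_iff m).mp hr
  calc SI m T g ≤ SI m {C} (fun _ => C) :=
        SI_mono m hT (fun _ => Finset.mem_singleton_self C) (fun x => (hle x).trans (hC x))
    _ = C := SI_const m C

lemma le_integral {f g : X → ℝ} {T : Finset ℝ} {C : ℝ} (hC : ∀ x, f x ≤ C)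
    (hT : ∀ x, g x ∈ T) (hle : ∀ x, g x ≤ f x) : SI m T g ≤ m.integral f :=
  le_csSup (Sset_bddAbove m hC) (SI_mem_Sset m hT hle)

lemma integral_le {f : X → ℝ} {C c : ℝ} (hC : ∀ x, f x ≤ C) (hc : ∀ x, c ≤ f x) :
    m.integral f ≤ C := by
  refine csSup_le (Sset_nonempty m hc) fun r hr => ?_
  obtain ⟨g, T, hT, hle, rfl⟩ := (mem_Sset_iff m).mp hr
  calc SI m T g ≤ SI m {C} (fun _ => C) :=
        SI_mono m hT (fun _ => Finset.mem_singleton_self C) (fun x => (hle x).trans (hC x))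
    _ = C := SI_const m C

lemma integral_simple {g : X → ℝ} {T : Finset ℝ} (hT : ∀ x, g x ∈ T) :
    m.integral g = SI m T g := by
  refine le_antisymm ?_ ?_
  · refine csSup_le ⟨SI m T g, SI_mem_Sset m hT (fun x => le_rfl)⟩ fun r hr => ?_
    obtain ⟨g', T', hT', hle, rfl⟩ := (mem_Sset_iff m).mp hr
    exact SI_mono m hT' hT hle
  · obtain ⟨x0⟩ := X_nonempty m
    have hTne : T.Nonempty := ⟨g x0, hT x0⟩
    exact le_csSup (Sset_bddAbove m (C := T.max' hTne)
      (fun x => Finset.le_max' T (g x) (hT x))) (SI_mem_Sset m hT fun _ => le_rfl)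

end MazurAux3

namespace MazurAux4
open MazurAux MazurAux2 MazurAux3 Pointwise
variable {X : Type*} (m : Mean X)

lemma integral_const (c : ℝ) : m.integral (fun _ : X => c) = c := by
  rw [integral_simple m (T := {c}) (fun _ => Finset.mem_singleton_self c), SI_const]

lemma integral_superadd {f f' : X → ℝ} {C C' : ℝ}
    (hC : ∀ x, |f x| ≤ C) (hC' : ∀ x, |f' x| ≤ C') :
    m.integral f + m.integral f' ≤ m.integral (fun x => f x + f' x) := by
  have hCu : ∀ x, f x ≤ C := fun x => (abs_le.mp (hC x)).2
  have hCl : ∀ x, -C ≤ f x := fun x => (abs_le.mp (hC x)).1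
  have hC'u : ∀ x, f' x ≤ C' := fun x => (abs_le.mp (hC' x)).2
  have hC'l : ∀ x, -C' ≤ f' x := fun x => (abs_le.mp (hC' x)).1
  have key : ∀ r ∈ Sset m f, ∀ r' ∈ Sset m f', r + r' ≤ m.integral (fun x => f x + f' x) := by
    intro r hr r' hr'
    obtain ⟨g, T, hT, hle, rfl⟩ := (mem_Sset_iff m).mp hr
    obtain ⟨g', T', hT', hle', rfl⟩ := (mem_Sset_iff m).mp hr'
    rw [← SI_add m hT hT' (W := T + T') (fun x => Finset.add_mem_add (hT x) (hT' x))]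
    exact le_integral m (C := C + C') (fun x => add_le_add (hCu x) (hC'u x))
      (fun x => Finset.add_mem_add (hT x) (hT' x)) (fun x => add_le_add (hle x) (hle' x))
  have h1 : m.integral f ≤ m.integral (fun x => f x + f' x) - m.integral f' := by
    refine csSup_le (Sset_nonempty m hCl) fun r hr => ?_
    have h2 : m.integral f' ≤ m.integral (fun x => f x + f' x) - r := by
      refine csSup_le (Sset_nonempty m hC'l) fun r' hr' => ?_
      linarith [key r hr r' hr']
    linarith
  linarith

lemma exists_approx {f : X → ℝ} {C : ℝ} (hC : ∀ x, |f x| ≤ C) {ε : ℝ} (hε : 0 < ε) :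
    ∃ (g : X → ℝ) (T : Finset ℝ), (∀ x, g x ∈ T) ∧ (∀ x, g x ≤ f x) ∧
      (∀ x, f x ≤ g x + ε) := by
  classical
  refine ⟨fun x => ε * (⌈f x / ε⌉ - 1),
    (Finset.Icc ⌈-C / ε⌉ ⌈C / ε⌉).image (fun n : ℤ => ε * ((n : ℝ) - 1)), ?_, ?_, ?_⟩
  · intro x
    refine Finset.mem_image.mpr ⟨⌈f x / ε⌉, Finset.mem_Icc.mpr ⟨?_, ?_⟩, rfl⟩
    · exact Int.ceil_le_ceil (by
        rw [div_le_div_iff_of_pos_right hε]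
        exact (abs_le.mp (hC x)).1)
    · exact Int.ceil_le_ceil (by
        rw [div_le_div_iff_of_pos_right hε]
        exact (abs_le.mp (hC x)).2)
  · intro x
    have h1 : (⌈f x / ε⌉ : ℝ) - 1 ≤ f x / ε := by
      have := Int.ceil_lt_add_one (f x / ε)
      linarith
    calc ε * ((⌈f x / ε⌉ : ℝ) - 1) ≤ ε * (f x / ε) :=
          mul_le_mul_of_nonneg_left h1 hε.le
      _ = f x := by field_simp
  · intro x
    have h1 : f x / ε ≤ (⌈f x / ε⌉ : ℝ) := Int.le_ceil _
    have h2 : f x ≤ ε * (⌈f x / ε⌉ : ℝ) := by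
      calc f x = ε * (f x / ε) := by field_simp
        _ ≤ ε * (⌈f x / ε⌉ : ℝ) := mul_le_mul_of_nonneg_left h1 hε.le
    linarith [h2]

lemma integral_le_SI_add {f g : X → ℝ} {T : Finset ℝ} {ε c : ℝ}
    (hc : ∀ x, c ≤ f x) (hT : ∀ x, g x ∈ T) (hup : ∀ x, f x ≤ g x + ε) :
    m.integral f ≤ SI m T g + ε := by
  refine csSup_le (Sset_nonempty m hc) fun r hr => ?_
  obtain ⟨g', T', hT', hle', rfl⟩ := (mem_Sset_iff m).mp hr
  have hW : ∀ x, g x + ε ∈ T + ({ε} : Finset ℝ) :=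
    fun x => Finset.add_mem_add (hT x) (Finset.mem_singleton_self ε)
  calc SI m T' g' ≤ SI m (T + {ε}) (fun x => g x + ε) :=
        SI_mono m hT' hW (fun x => (hle' x).trans (hup x))
    _ = SI m T g + ε := by
        rw [SI_add m hT (fun _ => Finset.mem_singleton_self ε) hW, SI_const]

lemma integral_add {f f' : X → ℝ} {C C' : ℝ}
    (hC : ∀ x, |f x| ≤ C) (hC' : ∀ x, |f' x| ≤ C') :
    m.integral (fun x => f x + f' x) = m.integral f + m.integral f' := by
  refine le_antisymm ?_ (integral_superadd m hC hC')
  refine le_of_forall_pos_le_add fun ε hε => ?_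
  obtain ⟨g, T, hT, hle, hup⟩ := exists_approx hC (half_pos hε)
  obtain ⟨g', T', hT', hle', hup'⟩ := exists_approx hC' (half_pos hε)
  have hW : ∀ x, g x + g' x ∈ T + T' := fun x => Finset.add_mem_add (hT x) (hT' x)
  calc m.integral (fun x => f x + f' x)
      ≤ SI m (T + T') (fun x => g x + g' x) + (ε / 2 + ε / 2) := by
        refine integral_le_SI_add m (c := -C + -C')
          (fun x => add_le_add (abs_le.mp (hC x)).1 (abs_le.mp (hC' x)).1) hW (fun x => ?_)
        have := hup x; have := hup' x; linarith
    _ = SI m T g + SI m T' g' + ε := by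
        rw [SI_add m hT hT' hW]; ring
    _ ≤ m.integral f + m.integral f' + ε := by
        have h1 := le_integral m (C := C) (fun x => (abs_le.mp (hC x)).2) hT hle
        have h2 := le_integral m (C := C') (fun x => (abs_le.mp (hC' x)).2) hT' hle'
        linarith

lemma integral_neg {f : X → ℝ} {C : ℝ} (hC : ∀ x, |f x| ≤ C) :
    m.integral (fun x => -f x) = -m.integral f := by
  have hC' : ∀ x, |(-f x)| ≤ C := fun x => by rw [abs_neg]; exact hC x
  have h := integral_add m hC hC'
  have h0 : (fun x => f x + -f x) = fun _ : X => (0 : ℝ) := by funext x; ring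
  rw [h0, integral_const] at h
  linarith

lemma integral_smul (c : ℝ) {f : X → ℝ} {C : ℝ} (hC : ∀ x, |f x| ≤ C) :
    m.integral (fun x => c * f x) = c * m.integral f := by
  rcases lt_trichotomy c 0 with hc | hc | hc
  · have hCn : ∀ x, |(-f x)| ≤ C := fun x => by rw [abs_neg]; exact hC x
    have key : ∀ (c' : ℝ), 0 < c' → ∀ (f' : X → ℝ) (C' : ℝ), (∀ x, |f' x| ≤ C') →
        m.integral (fun x => c' * f' x) = c' * m.integral f' := by
      intro c' hc' f' C' hC'
      refine le_antisymm ?_ ?_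
      · refine csSup_le (Sset_nonempty m (c := c' * -C')
          (fun x => by nlinarith [(abs_le.mp (hC' x)).1])) fun r hr => ?_
        obtain ⟨g, T, hT, hle, rfl⟩ := (mem_Sset_iff m).mp hr
        have h1 : SI m (T.image (fun y => (1/c') * y)) (fun x => (1/c') * g x)
            = (1/c') * SI m T g := SI_smul m (one_div_ne_zero hc'.ne') g T
        have h2 : (1/c') * SI m T g ≤ m.integral f' := by
          rw [← h1]
          refine le_integral m (C := C') (fun x => (abs_le.mp (hC' x)).2)
            (fun x => Finset.mem_image_of_mem _ (hT x)) (fun x => ?_)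
          have := hle x
          rw [div_mul_eq_mul_div, one_mul, div_le_iff₀ hc', mul_comm]
          exact this.trans_eq rfl
        calc SI m T g = c' * ((1/c') * SI m T g) := by field_simp
          _ ≤ c' * m.integral f' := mul_le_mul_of_nonneg_left h2 hc'.le
      · have h3 : m.integral f' ≤ m.integral (fun x => c' * f' x) / c' := by
          refine csSup_le (Sset_nonempty m (c := -C') (fun x => (abs_le.mp (hC' x)).1))
            fun r hr => ?_
          rw [le_div_iff₀ hc']
          obtain ⟨g, T, hT, hle, rfl⟩ := (mem_Sset_iff m).mp hr
          rw [show SI m T g * c' = c' * SI m T g from mul_comm _ _, ← SI_smul m hc'.ne' g T]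
          exact le_integral m (C := c' * C') (fun x => by nlinarith [(abs_le.mp (hC' x)).2])
            (fun x => Finset.mem_image_of_mem _ (hT x))
            (fun x => mul_le_mul_of_nonneg_left (hle x) hc'.le)
        calc c' * m.integral f' ≤ c' * (m.integral (fun x => c' * f' x) / c') :=
              mul_le_mul_of_nonneg_left h3 hc'.le
          _ = m.integral (fun x => c' * f' x) := by field_simp
    have h1 : (fun x => c * f x) = (fun x => (-c) * (-f x)) := by funext x; ring
    rw [h1, key (-c) (by linarith) _ C hCn, integral_neg m hC]
    ring
  · subst hc
    have h0 : (fun x => (0:ℝ) * f x) = fun _ : X => (0:ℝ) := by funext x; ring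
    rw [h0, integral_const]; ring
  · -- positive case: reuse key; restate inline
    refine le_antisymm ?_ ?_
    · refine csSup_le (Sset_nonempty m (c := c * -C)
        (fun x => by nlinarith [(abs_le.mp (hC x)).1])) fun r hr => ?_
      obtain ⟨g, T, hT, hle, rfl⟩ := (mem_Sset_iff m).mp hr
      have h1 : SI m (T.image (fun y => (1/c) * y)) (fun x => (1/c) * g x)
          = (1/c) * SI m T g := SI_smul m (one_div_ne_zero hc.ne') g T
      have h2 : (1/c) * SI m T g ≤ m.integral f := by
        rw [← h1]
        refine le_integral m (C := C) (fun x => (abs_le.mp (hC x)).2)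
          (fun x => Finset.mem_image_of_mem _ (hT x)) (fun x => ?_)
        have := hle x
        rw [div_mul_eq_mul_div, one_mul, div_le_iff₀ hc, mul_comm]
        exact this.trans_eq rfl
      calc SI m T g = c * ((1/c) * SI m T g) := by field_simp
        _ ≤ c * m.integral f := mul_le_mul_of_nonneg_left h2 hc.le
    · have h3 : m.integral f ≤ m.integral (fun x => c * f x) / c := by
        refine csSup_le (Sset_nonempty m (c := -C) (fun x => (abs_le.mp (hC x)).1))
          fun r hr => ?_
        rw [le_div_iff₀ hc]
        obtain ⟨g, T, hT, hle, rfl⟩ := (mem_Sset_iff m).mp hr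
        rw [show SI m T g * c = c * SI m T g from mul_comm _ _, ← SI_smul m hc.ne' g T]
        exact le_integral m (C := c * C) (fun x => by nlinarith [(abs_le.mp (hC x)).2])
          (fun x => Finset.mem_image_of_mem _ (hT x))
          (fun x => mul_le_mul_of_nonneg_left (hle x) hc.le)
      calc c * m.integral f ≤ c * (m.integral (fun x => c * f x) / c) :=
            mul_le_mul_of_nonneg_left h3 hc.le
        _ = m.integral (fun x => c * f x) := by field_simp

lemma integral_mono {f f' : X → ℝ} {C : ℝ} (hC : ∀ x, |f' x| ≤ C)
    {c : ℝ} (hc : ∀ x, c ≤ f x) (hle : ∀ x, f x ≤ f' x) :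
    m.integral f ≤ m.integral f' := by
  refine csSup_le (Sset_nonempty m hc) fun r hr => ?_
  refine le_csSup (Sset_bddAbove m (fun x => (abs_le.mp (hC x)).2)) ?_
  obtain ⟨g, hfin, hg, rfl⟩ := hr
  exact ⟨g, hfin, fun x => (hg x).trans (hle x), rfl⟩

end MazurAux4

namespace MazurAux5
open MazurAux MazurAux2 MazurAux3 MazurAux4
variable {X : Type*} (m : Mean X)

lemma integral_finset_sum {ι : Type*} (s : Finset ι) (ψ : ι → X → ℝ) (Cb : ι → ℝ)
    (hb : ∀ i, ∀ x, |ψ i x| ≤ Cb i) :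
    m.integral (fun x => ∑ i ∈ s, ψ i x) = ∑ i ∈ s, m.integral (ψ i) := by
  classical
  induction s using Finset.induction with
  | empty => simp only [Finset.sum_empty]; exact integral_const m 0
  | @insert a s' ha ih =>
    have hsum_b : ∀ x, |∑ i ∈ s', ψ i x| ≤ ∑ i ∈ s', Cb i := fun x =>
      (Finset.abs_sum_le_sum_abs _ _).trans (Finset.sum_le_sum fun i _ => hb i x)
    rw [Finset.sum_insert ha, ← ih]
    have hfe : (fun x => ∑ i ∈ insert a s', ψ i x) =
        fun x => ψ a x + ∑ i ∈ s', ψ i x := by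
      funext x; rw [Finset.sum_insert ha]
    rw [hfe, integral_add m (hb a) hsum_b]

lemma integral_combo {ι : Type*} [Fintype ι] (a : ι → ℝ) (χ : ι → X → ℝ) (Cb : ι → ℝ)
    (hb : ∀ i, ∀ x, |χ i x| ≤ Cb i) :
    m.integral (fun x => ∑ i, a i * χ i x) = ∑ i, a i * m.integral (χ i) := by
  rw [integral_finset_sum m Finset.univ (fun i x => a i * χ i x) (fun i => |a i| * Cb i)
    (fun i x => by rw [abs_mul]; exact mul_le_mul_of_nonneg_left (hb i x) (abs_nonneg _))]
  exact Finset.sum_congr rfl fun i _ => integral_smul m (a i) (hb i)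

lemma Sset_comp_subset (σ τ : X → X) (hτσ : ∀ x, τ (σ x) = x) (hστ : ∀ x, σ (τ x) = x)
    (hminv : ∀ A : Set X, m.m (σ '' A) = m.m A) (f : X → ℝ) :
    Sset m (fun x => f (σ x)) ⊆ Sset m f := by
  rintro r ⟨g, hfin, hle, rfl⟩
  refine ⟨fun x => g (τ x), hfin.subset (Set.range_comp_subset_range τ g), fun x => ?_, ?_⟩
  · have h := hle (τ x); simp only at h ⊢; rwa [hστ x] at h
  · refine finsum_congr fun y => ?_
    have him : (fun x => g (τ x)) ⁻¹' {y} = σ '' (g ⁻¹' {y}) := by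
      ext x
      simp only [Set.mem_preimage, Set.mem_singleton_iff, Set.mem_image]
      constructor
      · intro hx; exact ⟨τ x, hx, hστ x⟩
      · rintro ⟨w, hw, rfl⟩; rwa [hτσ w]
    rw [him, hminv]

lemma integral_comp (σ τ : X → X) (hτσ : ∀ x, τ (σ x) = x) (hστ : ∀ x, σ (τ x) = x)
    (hminv : ∀ A : Set X, m.m (σ '' A) = m.m A) (f : X → ℝ) :
    m.integral (fun x => f (σ x)) = m.integral f := by
  have hminv' : ∀ A : Set X, m.m (τ '' A) = m.m A := by
    intro A
    have hcomp : σ ∘ τ = id := funext hστ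
    have h1 : σ '' (τ '' A) = A := by rw [← Set.image_comp, hcomp, Set.image_id]
    calc m.m (τ '' A) = m.m (σ '' (τ '' A)) := (hminv _).symm
      _ = m.m A := by rw [h1]
  have hS : Sset m (fun x => f (σ x)) = Sset m f := by
    refine le_antisymm (Sset_comp_subset m σ τ hτσ hστ hminv f) ?_
    have h2 := Sset_comp_subset m τ σ hστ hτσ hminv' (fun x => f (σ x))
    have h3 : (fun x => f (σ (τ x))) = f := by funext x; rw [hστ x]
    rwa [h3] at h2
  rw [integral_eq_sSup, integral_eq_sSup, hS]

end MazurAux5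

namespace MazurAux6
open MazurAux MazurAux2 MazurAux3 MazurAux4 MazurAux5

lemma findim_step {X : Type*} (m : Mean X) {ι : Type*} [Fintype ι] [DecidableEq ι]
    (χ : ι → X → ℝ) (Cb : ι → ℝ) (hb : ∀ i x, |χ i x| ≤ Cb i)
    {ε : ℝ} (hε : 0 < ε) :
    ∃ (s : Finset X) (w : X → ℝ), (∀ x, 0 ≤ w x) ∧ (∀ x ∉ s, w x = 0) ∧
      (∑ x ∈ s, w x = 1) ∧ ∀ i, |∑ x ∈ s, w x * χ i x - m.integral (χ i)| < ε := by
  classical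
  set v : X → (ι → ℝ) := fun x i => χ i x with hv
  set c : ι → ℝ := fun i => m.integral (χ i) with hcdef
  -- Step 1: c lies in the closure of the convex hull of the range of v
  have hc : c ∈ closure (convexHull ℝ (Set.range v)) := by
    by_contra hcn
    obtain ⟨f, u, hfu, huc⟩ := geometric_hahn_banach_closed_point
      ((convex_convexHull ℝ (Set.range v)).closure) isClosed_closure hcn
    set a : ι → ℝ := fun i => f (fun j => if i = j then (1:ℝ) else 0) with ha
    have hfx : ∀ x : ι → ℝ, f x = ∑ i, x i * a i := by
      intro x
      have h1 : f x = f (∑ i, x i • fun j => if i = j then (1:ℝ) else 0) := by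
        rw [← pi_eq_sum_univ x]
      rw [h1, map_sum]
      exact Finset.sum_congr rfl fun i _ => by rw [map_smul]; simp [ha, smul_eq_mul]
    have hint : m.integral (fun x => ∑ i, (χ i x) * a i) = ∑ i, (m.integral (χ i)) * a i := by
      have h2 : (fun x => ∑ i, (χ i x) * a i) = fun x => ∑ i, a i * χ i x := by
        funext x; exact Finset.sum_congr rfl fun i _ => mul_comm _ _
      rw [h2, integral_combo m a χ Cb hb]
      exact Finset.sum_congr rfl fun i _ => mul_comm _ _
    have hlt : ∀ x : X, (∑ i, (χ i x) * a i) ≤ u := by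
      intro x
      have : f (v x) < u := hfu _ (subset_closure (subset_convexHull ℝ _ ⟨x, rfl⟩))
      rw [hfx (v x)] at this
      exact this.le
    have hlow : ∀ x : X, -(∑ i, |a i| * Cb i) ≤ ∑ i, (χ i x) * a i := by
      intro x
      have : |∑ i, (χ i x) * a i| ≤ ∑ i, |a i| * Cb i := by
        refine (Finset.abs_sum_le_sum_abs _ _).trans (Finset.sum_le_sum fun i _ => ?_)
        rw [abs_mul, mul_comm]
        exact mul_le_mul_of_nonneg_left (hb i x) (abs_nonneg _)
      linarith [(abs_le.mp this).1]
    have h3 : m.integral (fun x => ∑ i, (χ i x) * a i) ≤ u := integral_le m hlt hlow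
    rw [hint] at h3
    have h4 : f c = ∑ i, (m.integral (χ i)) * a i := hfx c
    linarith
  -- Step 2: extract a convex combination within ε
  obtain ⟨b, hbmem, hdist⟩ := Metric.mem_closure_iff.mp hc ε hε
  rw [convexHull_eq] at hbmem
  obtain ⟨κ, t, wgt, z, hw0, hw1, hz, hcm⟩ := hbmem
  obtain ⟨x0⟩ := X_nonempty m
  set γ : κ → X := fun i => if h : i ∈ t then (hz i h).choose else x0 with hγ
  have hγspec : ∀ i ∈ t, v (γ i) = z i := by
    intro i hi
    simp only [hγ, dif_pos hi]
    exact (hz i hi).choose_spec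
  have hbeq : b = ∑ i ∈ t, wgt i • z i := by
    rw [← Finset.centerMass_eq_of_sum_1 t z hw1, hcm]
  refine ⟨t.image γ, fun x => ∑ i ∈ t.filter (fun i => γ i = x), wgt i, ?_, ?_, ?_, ?_⟩
  · intro x
    exact Finset.sum_nonneg fun i hi => hw0 i (Finset.mem_of_mem_filter i hi)
  · intro x hx
    refine Finset.sum_eq_zero fun i hi => ?_
    obtain ⟨hit, hγi⟩ := Finset.mem_filter.mp hi
    exact absurd (hγi ▸ Finset.mem_image_of_mem γ hit) hx
  · rw [Finset.sum_fiberwise_of_maps_to (fun i hi => Finset.mem_image_of_mem γ hi) wgt]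
    exact hw1
  · intro j
    have hsum : ∑ x ∈ t.image γ, (∑ i ∈ t.filter (fun i => γ i = x), wgt i) * χ j x
        = ∑ i ∈ t, wgt i * χ j (γ i) := by
      rw [← Finset.sum_fiberwise_of_maps_to (fun i hi => Finset.mem_image_of_mem γ hi)
        (fun i => wgt i * χ j (γ i))]
      refine Finset.sum_congr rfl fun x hx => ?_
      rw [Finset.sum_mul]
      refine Finset.sum_congr rfl fun i hi => ?_
      rw [(Finset.mem_filter.mp hi).2]
    have hbj : ∑ i ∈ t, wgt i * χ j (γ i) = b j := by
      rw [hbeq]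
      rw [Finset.sum_apply]
      refine Finset.sum_congr rfl fun i hi => ?_
      rw [Pi.smul_apply, smul_eq_mul, ← hγspec i hi]
    rw [hsum, hbj]
    have : dist (c j) (b j) ≤ dist c b := dist_le_pi_dist c b j
    rw [Real.dist_eq] at this
    calc |b j - c j| = |c j - b j| := by rw [abs_sub_comm]
      _ ≤ dist c b := this
      _ < ε := hdist

end MazurAux6

namespace MazurAux7
open MazurAux MazurAux2 MazurAux3 MazurAux4 MazurAux5 MazurAux6

variable {G : Type*} [DecidableEq G]

noncomputable def Emb (s : Finset G) (q : G → ℝ) : lp (fun _ : G => ℝ) 1 :=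
  ∑ g ∈ s, q g • lp.single 1 g (1:ℝ)

lemma Emb_apply (s : Finset G) (q : G → ℝ) (g' : G) :
    (Emb s q : ∀ _ : G, ℝ) g' = if g' ∈ s then q g' else 0 := by
  have h1 : ((Emb s q : lp (fun _ : G => ℝ) 1) : ∀ _ : G, ℝ) g'
      = ∑ g ∈ s, ((q g • lp.single 1 g (1:ℝ) : lp (fun _ : G => ℝ) 1) : ∀ _ : G, ℝ) g' := by
    unfold Emb
    rw [lp.coeFn_sum, Finset.sum_apply]
  rw [h1]
  have h2 : ∀ g ∈ s, ((q g • lp.single 1 g (1:ℝ) : lp (fun _ : G => ℝ) 1) : ∀ _ : G, ℝ) g'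
      = if g = g' then q g else 0 := by
    intro g _
    have hs : ((q g • lp.single 1 g (1:ℝ) : lp (fun _ : G => ℝ) 1) : ∀ _ : G, ℝ) g'
        = q g * ((lp.single 1 g (1:ℝ) : lp (fun _ : G => ℝ) 1) : ∀ _ : G, ℝ) g' := by
      rw [lp.coeFn_smul]; rfl
    have h3 : ((lp.single 1 g (1:ℝ) : lp (fun _ : G => ℝ) 1) : ∀ _ : G, ℝ) g'
        = if g' = g then (1:ℝ) else 0 := by
      rw [lp.single_apply]
      split_ifs with h
      · subst h; exact Pi.single_eq_same _ _
      · exact Pi.single_eq_of_ne h _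
    rw [hs, h3]
    by_cases h : g' = g
    · subst h; simp
    · rw [if_neg h, mul_zero, if_neg (fun hh : g = g' => h hh.symm)]
  rw [Finset.sum_congr rfl h2, Finset.sum_ite_eq' s g' (fun g => q g)]

lemma Emb_norm (s : Finset G) (q : G → ℝ) :
    ‖Emb s q‖ = ∑ g ∈ s, |q g| := by
  have h0 : (0:ℝ) < (1:ENNReal).toReal := by norm_num
  rw [lp.norm_eq_tsum_rpow h0 (Emb s q)]
  have h1 : ∀ g : G, ‖(Emb s q : ∀ _ : G, ℝ) g‖ ^ (1:ENNReal).toReal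
      = if g ∈ s then |q g| else 0 := by
    intro g
    rw [Emb_apply]
    split_ifs with h
    · simp [Real.norm_eq_abs]
    · simp
  rw [tsum_congr h1, tsum_eq_sum (s := s) (fun g hg => by rw [if_neg hg])]
  simp only [ENNReal.toReal_one, one_div_one, Real.rpow_one]
  exact Finset.sum_congr rfl fun g hg => by rw [if_pos hg]

lemma Emb_subset {s s' : Finset G} (hss : s ⊆ s') {q : G → ℝ} (hq : ∀ g ∉ s, q g = 0) :
    Emb s q = Emb s' q :=
  Finset.sum_subset hss (fun g _ hgs => by rw [hq g hgs, zero_smul])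

lemma Emb_add (s : Finset G) (a b : G → ℝ) :
    Emb s (fun g => a g + b g) = Emb s a + Emb s b := by
  unfold Emb
  rw [← Finset.sum_add_distrib]
  exact Finset.sum_congr rfl fun g _ => by rw [add_smul]

lemma Emb_smul (s : Finset G) (c : ℝ) (a : G → ℝ) :
    Emb s (fun g => c * a g) = c • Emb s a := by
  unfold Emb
  rw [Finset.smul_sum]
  exact Finset.sum_congr rfl fun g _ => by rw [smul_smul]

end MazurAux7

namespace MazurAux8
open MazurAux MazurAux2 MazurAux3 MazurAux4 MazurAux5 MazurAux6 MazurAux7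

variable {G : Type*} [Group G] [DecidableEq G]

def sbar (s : Finset G) (h : G) : Finset G := s ∪ s.image (fun g => h * g * h⁻¹)

lemma diff_zero_off_sbar {s : Finset G} {p : G → ℝ} (hp : ∀ g ∉ s, p g = 0) (h : G) :
    ∀ g ∉ sbar s h, p (h⁻¹ * g * h) - p g = 0 := by
  intro g hg
  rw [sbar, Finset.mem_union, not_or] at hg
  have h1 : p g = 0 := hp g hg.1
  have h2 : p (h⁻¹ * g * h) = 0 := by
    refine hp _ (fun c => hg.2 ?_)
    exact Finset.mem_image.mpr ⟨h⁻¹ * g * h, c, by group⟩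
  rw [h1, h2, sub_zero]

noncomputable def vecp {N : ℕ} (hv : Fin N → G) (s : Finset G) (p : G → ℝ) :
    Fin N → lp (fun _ : G => ℝ) 1 :=
  fun j => Emb (sbar s (hv j)) (fun g => p ((hv j)⁻¹ * g * hv j) - p g)

lemma abs_sub_le_abs_add_abs (a b : ℝ) : |a - b| ≤ |a| + |b| := by
  rw [sub_eq_add_neg]
  exact (abs_add_le _ _).trans (by rw [abs_neg])

lemma mazur_step (m : Mean G) (H : Subgroup G)
    (hm : ∀ h ∈ H, ∀ A : Set G, m.m ((fun x => h * x * h⁻¹) '' A) = m.m A)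
    {N : ℕ} (hv : Fin N → G) (hvmem : ∀ j, hv j ∈ H)
    (d : Fin N → G → ℝ) (Cd : Fin N → ℝ) (hCd : ∀ j g, |d j g| ≤ Cd j)
    {δ : ℝ} (hδ : 0 < δ) :
    ∃ (s : Finset G) (p : G → ℝ), (∀ g, 0 ≤ p g) ∧ (∀ g ∉ s, p g = 0) ∧
      (∑ g ∈ s, p g = 1) ∧
      (∀ j, |∑ g ∈ s, p g * d j g - m.integral (d j)| ≤ δ) ∧
      (∀ j, ∑ g ∈ sbar s (hv j), |p ((hv j)⁻¹ * g * hv j) - p g| ≤ δ) := by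
  by_contra hcon
  push_neg at hcon
  set K : Set (Fin N → lp (fun _ : G => ℝ) 1) :=
    {x | ∃ s p, ((∀ g, 0 ≤ p g) ∧ (∀ g ∉ s, p g = 0) ∧
      (∑ g ∈ s, p g = 1) ∧ (∀ j, |∑ g ∈ s, p g * d j g - m.integral (d j)| ≤ δ)) ∧
      x = vecp hv s p} with hK
  -- every element of K has norm > δ
  have hKnorm : ∀ x ∈ K, δ < ‖x‖ := by
    rintro x ⟨s, p, ⟨h1, h2, h3, h4⟩, rfl⟩
    obtain ⟨j, hj⟩ := hcon s p h1 h2 h3 h4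
    have he : ∑ g ∈ sbar s (hv j), |p ((hv j)⁻¹ * g * hv j) - p g| = ‖vecp hv s p j‖ :=
      (Emb_norm _ _).symm
    calc δ < ∑ g ∈ sbar s (hv j), |p ((hv j)⁻¹ * g * hv j) - p g| := hj
      _ = ‖vecp hv s p j‖ := he
      _ ≤ ‖vecp hv s p‖ := norm_le_pi_norm (vecp hv s p) j
  have h0 : (0 : Fin N → lp (fun _ : G => ℝ) 1) ∉ closure K := by
    intro h0
    obtain ⟨b, hbK, hdist⟩ := Metric.mem_closure_iff.mp h0 δ hδ
    rw [dist_zero_left] at hdist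
    linarith [hKnorm b hbK]
  -- K is convex
  have hKconv : Convex ℝ K := by
    rintro x ⟨s1, p1, ⟨a1, b1, c1, d1⟩, rfl⟩ y ⟨s2, p2, ⟨a2, b2, c2, d2⟩, rfl⟩ t1 t2 ht1 ht2 hts
    refine ⟨s1 ∪ s2, fun g => t1 * p1 g + t2 * p2 g, ⟨?_, ?_, ?_, ?_⟩, ?_⟩
    · intro g
      exact add_nonneg (mul_nonneg ht1 (a1 g)) (mul_nonneg ht2 (a2 g))
    · intro g hg
      show t1 * p1 g + t2 * p2 g = 0
      rw [b1 g (fun c => hg (Finset.mem_union_left _ c)),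
        b2 g (fun c => hg (Finset.mem_union_right _ c)), mul_zero, mul_zero, add_zero]
    · have e1 : ∑ g ∈ s1 ∪ s2, p1 g = 1 := by
        rw [← c1]
        exact (Finset.sum_subset Finset.subset_union_left (fun g _ hg => b1 g hg)).symm
      have e2 : ∑ g ∈ s1 ∪ s2, p2 g = 1 := by
        rw [← c2]
        exact (Finset.sum_subset Finset.subset_union_right (fun g _ hg => b2 g hg)).symm
      rw [Finset.sum_add_distrib, ← Finset.mul_sum, ← Finset.mul_sum, e1, e2, mul_one, mul_one,
        hts]
    · intro j
      have e1 : ∑ g ∈ s1 ∪ s2, p1 g * d j g = ∑ g ∈ s1, p1 g * d j g :=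
        (Finset.sum_subset Finset.subset_union_left
          (fun g _ hg => by rw [b1 g hg, zero_mul])).symm
      have e2 : ∑ g ∈ s1 ∪ s2, p2 g * d j g = ∑ g ∈ s2, p2 g * d j g :=
        (Finset.sum_subset Finset.subset_union_right
          (fun g _ hg => by rw [b2 g hg, zero_mul])).symm
      have e3 : ∑ g ∈ s1 ∪ s2, (t1 * p1 g + t2 * p2 g) * d j g
          = t1 * ∑ g ∈ s1, p1 g * d j g + t2 * ∑ g ∈ s2, p2 g * d j g := by
        rw [← e1, ← e2, Finset.mul_sum, Finset.mul_sum, ← Finset.sum_add_distrib]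
        exact Finset.sum_congr rfl fun g _ => by ring
      rw [e3]
      set S1 := ∑ g ∈ s1, p1 g * d j g
      set S2 := ∑ g ∈ s2, p2 g * d j g
      set I := m.integral (d j)
      have key : t1 * S1 + t2 * S2 - I = t1 * (S1 - I) + t2 * (S2 - I) := by
        rw [show t1 * (S1 - I) + t2 * (S2 - I) = t1 * S1 + t2 * S2 - (t1 + t2) * I from by ring,
          hts, one_mul]
      rw [key]
      calc |t1 * (S1 - I) + t2 * (S2 - I)| ≤ |t1 * (S1 - I)| + |t2 * (S2 - I)| := abs_add_le _ _
        _ = t1 * |S1 - I| + t2 * |S2 - I| := by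
            rw [abs_mul, abs_mul, abs_of_nonneg ht1, abs_of_nonneg ht2]
        _ ≤ t1 * δ + t2 * δ := add_le_add
            (mul_le_mul_of_nonneg_left (d1 j) ht1) (mul_le_mul_of_nonneg_left (d2 j) ht2)
        _ = δ := by rw [← add_mul, hts, one_mul]
    · funext j
      have hsub1 : sbar s1 (hv j) ⊆ sbar (s1 ∪ s2) (hv j) :=
        Finset.union_subset_union Finset.subset_union_left
          (Finset.image_subset_image Finset.subset_union_left)
      have hsub2 : sbar s2 (hv j) ⊆ sbar (s1 ∪ s2) (hv j) :=
        Finset.union_subset_union Finset.subset_union_right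
          (Finset.image_subset_image Finset.subset_union_right)
      have q1e : Emb (sbar s1 (hv j)) (fun g => p1 ((hv j)⁻¹ * g * hv j) - p1 g)
          = Emb (sbar (s1 ∪ s2) (hv j)) (fun g => p1 ((hv j)⁻¹ * g * hv j) - p1 g) :=
        Emb_subset hsub1 (diff_zero_off_sbar b1 (hv j))
      have q2e : Emb (sbar s2 (hv j)) (fun g => p2 ((hv j)⁻¹ * g * hv j) - p2 g)
          = Emb (sbar (s1 ∪ s2) (hv j)) (fun g => p2 ((hv j)⁻¹ * g * hv j) - p2 g) :=
        Emb_subset hsub2 (diff_zero_off_sbar b2 (hv j))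
      show t1 • vecp hv s1 p1 j + t2 • vecp hv s2 p2 j = vecp hv (s1 ∪ s2) _ j
      unfold vecp
      rw [q1e, q2e, ← Emb_smul, ← Emb_smul, ← Emb_add]
      congr 1
      funext g
      ring
  obtain ⟨f, u, hfu, hu0⟩ := geometric_hahn_banach_closed_point
    (hKconv.closure) isClosed_closure h0
  rw [map_zero] at hu0
  set ψ : Fin N → G → ℝ := fun j g => f (Pi.single (M := fun _ : Fin N => lp (fun _ : G => ℝ) 1) j (lp.single 1 g (1:ℝ))) with hψ
  have hψb : ∀ j g, |ψ j g| ≤ ‖f‖ := by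
    intro j g
    have h1 := f.le_opNorm (Pi.single (M := fun _ : Fin N => lp (fun _ : G => ℝ) 1) j (lp.single 1 g (1:ℝ)))
    have h2 : ‖lp.single (E := fun _ : G => ℝ) 1 g (1:ℝ)‖ = 1 := by
      have := lp.norm_single (E := fun _ : G => ℝ) (p := 1) (by norm_num) g (1:ℝ)
      simpa using this
    have h3 : ‖Pi.single (M := fun _ : Fin N => lp (fun _ : G => ℝ) 1) j (lp.single 1 g (1:ℝ))‖ ≤ 1 := by
      refine (pi_norm_le_iff_of_nonneg zero_le_one).mpr fun i => ?_
      by_cases hij : i = j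
      · subst hij; rw [Pi.single_eq_same, h2]
      · rw [Pi.single_eq_of_ne hij]; simp
    have h4 : ‖f (Pi.single (M := fun _ : Fin N => lp (fun _ : G => ℝ) 1) j (lp.single 1 g (1:ℝ)))‖ ≤ ‖f‖ * 1 :=
      h1.trans (mul_le_mul_of_nonneg_left h3 (norm_nonneg f))
    rw [mul_one] at h4
    simpa [Real.norm_eq_abs] using h4
  set θ : Fin N → G → ℝ := fun j g => ψ j (hv j * g * (hv j)⁻¹) - ψ j g with hθ
  have hθb : ∀ j g, |θ j g| ≤ ‖f‖ + ‖f‖ := fun j g =>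
    (abs_sub_le_abs_add_abs _ _).trans (add_le_add (hψb _ _) (hψb _ _))
  have hθint : ∀ j, m.integral (θ j) = 0 := by
    intro j
    have hinv := integral_comp m (fun x => hv j * x * (hv j)⁻¹) (fun x => (hv j)⁻¹ * x * hv j)
      (fun x => by group) (fun x => by group) (hm (hv j) (hvmem j)) (ψ j)
    have hadd : m.integral (fun g => ψ j (hv j * g * (hv j)⁻¹) + (-ψ j g)) =
        m.integral (fun g => ψ j (hv j * g * (hv j)⁻¹)) + m.integral (fun g => -ψ j g) :=
      integral_add m (C := ‖f‖) (C' := ‖f‖) (fun g => hψb j _)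
        (fun g => by rw [abs_neg]; exact hψb j g)
    have hneg : m.integral (fun g => -ψ j g) = - m.integral (ψ j) := integral_neg m (hψb j)
    have hfe : θ j = fun g => ψ j (hv j * g * (hv j)⁻¹) + (-ψ j g) := by
      funext g; rw [hθ]; ring
    rw [hfe, hadd, hinv, hneg]; ring
  -- evaluation of f on vectors vecp
  have heval : ∀ (s : Finset G) (p : G → ℝ), (∀ g ∉ s, p g = 0) →
      f (vecp hv s p) = ∑ j, ∑ g ∈ s, p g * θ j g := by
    intro s p hp
    have h1 : vecp hv s p = ∑ j, Pi.single j (vecp hv s p j) :=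
      (Finset.univ_sum_single (vecp hv s p)).symm
    rw [h1, map_sum]
    refine Finset.sum_congr rfl fun j _ => ?_
    have h2 : (Pi.single j (vecp hv s p j) : Fin N → lp (fun _ : G => ℝ) 1)
        = ∑ g ∈ sbar s (hv j), (p ((hv j)⁻¹ * g * hv j) - p g)
            • Pi.single (M := fun _ : Fin N => lp (fun _ : G => ℝ) 1) j (lp.single 1 g (1:ℝ)) := by
      have h21 := map_sum (LinearMap.single ℝ (fun _ : Fin N => lp (fun _ : G => ℝ) 1) j)
        (fun g => (p ((hv j)⁻¹ * g * hv j) - p g) • lp.single 1 g (1:ℝ)) (sbar s (hv j))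
      simp only [LinearMap.single_apply, map_smul] at h21
      exact h21
    rw [h2, map_sum]
    have h3 : ∀ g ∈ sbar s (hv j),
        f ((p ((hv j)⁻¹ * g * hv j) - p g) • Pi.single (M := fun _ : Fin N => lp (fun _ : G => ℝ) 1) j (lp.single 1 g (1:ℝ)))
        = (p ((hv j)⁻¹ * g * hv j) - p g) * ψ j g := by
      intro g _
      rw [map_smul, smul_eq_mul, hψ]
    rw [Finset.sum_congr rfl h3]
    -- algebra
    have hA : ∑ g ∈ sbar s (hv j), (p ((hv j)⁻¹ * g * hv j) - p g) * ψ j g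
        = ∑ g ∈ sbar s (hv j), p ((hv j)⁻¹ * g * hv j) * ψ j g
          - ∑ g ∈ sbar s (hv j), p g * ψ j g := by
      rw [← Finset.sum_sub_distrib]
      exact Finset.sum_congr rfl fun g _ => by ring
    have hB : ∑ g ∈ sbar s (hv j), p g * ψ j g = ∑ g ∈ s, p g * ψ j g :=
      (Finset.sum_subset (Finset.subset_union_left)
        (fun g _ hg => by rw [hp g hg, zero_mul])).symm
    have hC : ∑ g ∈ sbar s (hv j), p ((hv j)⁻¹ * g * hv j) * ψ j g
        = ∑ g ∈ s, p g * ψ j (hv j * g * (hv j)⁻¹) := by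
      have hinj : ∀ x ∈ s, ∀ y ∈ s, hv j * x * (hv j)⁻¹ = hv j * y * (hv j)⁻¹ → x = y := by
        intro x _ y _ hxy
        have := mul_right_cancel hxy
        exact mul_left_cancel this
      have himg : ∑ x ∈ s.image (fun g => hv j * g * (hv j)⁻¹),
          p ((hv j)⁻¹ * x * hv j) * ψ j x = ∑ g ∈ s, p g * ψ j (hv j * g * (hv j)⁻¹) := by
        rw [Finset.sum_image hinj]
        refine Finset.sum_congr rfl fun g _ => ?_
        have : (hv j)⁻¹ * (hv j * g * (hv j)⁻¹) * hv j = g := by group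
        rw [this]
      rw [← himg]
      refine (Finset.sum_subset (Finset.subset_union_right) fun x _ hx => ?_).symm
      have : p ((hv j)⁻¹ * x * hv j) = 0 := by
        refine hp _ (fun c => hx ?_)
        exact Finset.mem_image.mpr ⟨(hv j)⁻¹ * x * hv j, c, by group⟩
      rw [this, zero_mul]
    rw [hA, hB, hC, ← Finset.sum_sub_distrib]
    exact Finset.sum_congr rfl fun g _ => by rw [hθ]; ring
  -- construct a contradiction point via the finite-dimensional step
  have hu : 0 < -u := by linarith
  have hε0 : 0 < min δ ((-u) / (N + 1)) := lt_min hδ (by positivity)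
  obtain ⟨s, w, hw0, hwz, hw1, hwc⟩ := findim_step m (ι := Fin N ⊕ Fin N)
    (Sum.elim d θ) (Sum.elim Cd (fun _ => ‖f‖ + ‖f‖))
    (fun i x => by cases i with
      | inl j => exact hCd j x
      | inr j => exact hθb j x) hε0
  have hvecK : vecp hv s w ∈ K := by
    refine ⟨s, w, ⟨hw0, hwz, hw1, fun j => ?_⟩, rfl⟩
    have := hwc (Sum.inl j)
    simp only [Sum.elim_inl] at this
    exact this.le.trans (min_le_left _ _)
  have hlt : f (vecp hv s w) < u := hfu _ (subset_closure hvecK)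
  have hbig : |f (vecp hv s w)| ≤ (N : ℝ) * ((-u) / (N + 1)) := by
    rw [heval s w hwz]
    refine (Finset.abs_sum_le_sum_abs _ _).trans ?_
    have hj : ∀ j : Fin N, |∑ g ∈ s, w g * θ j g| ≤ (-u) / (N + 1) := by
      intro j
      have h6 := hwc (Sum.inr j)
      simp only [Sum.elim_inr] at h6
      rw [hθint j, sub_zero] at h6
      exact h6.le.trans (min_le_right _ _)
    calc ∑ j, |∑ g ∈ s, w g * θ j g| ≤ ∑ _j : Fin N, (-u) / (N + 1) :=
          Finset.sum_le_sum fun j _ => hj j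
      _ = (N : ℝ) * ((-u) / (N + 1)) := by
          rw [Finset.sum_const, Finset.card_univ, Fintype.card_fin, nsmul_eq_mul]
  have h5 : (N : ℝ) * ((-u) / (N + 1)) < -u := by
    have hN : (N : ℝ) < N + 1 := by linarith
    have h7 : (N : ℝ) / (N + 1) < 1 := (div_lt_one (by positivity)).mpr hN
    calc (N : ℝ) * ((-u) / (N + 1)) = ((N : ℝ) / (N + 1)) * (-u) := by ring
      _ < 1 * (-u) := by
          exact mul_lt_mul_of_pos_right h7 hu
      _ = -u := one_mul _
  have h8 : u < f (vecp hv s w) := by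
    have h9 := neg_abs_le (f (vecp hv s w))
    linarith
  linarith

end MazurAux8

/-- Lemma (Mazur argument): given an `H`-conjugation invariant mean `m` on `G` and a
separable subalgebra `A ⊆ ℓ^∞(G)`, there is a sequence of probability vectors `pₙ` which is
asymptotically conjugation-invariant under `H` in `ℓ¹`-norm and converges to `m` on `A`. -/
theorem mazur_probability_vectors {G : Type*} [Group G] [Countable G]
    (H : Subgroup G) (m : Mean G)
    (hm : ∀ h ∈ H, ∀ A : Set G, m.m ((fun x => h * x * h⁻¹) '' A) = m.m A)
    (A : Set (G → ℝ))
    (hbdd : ∀ φ ∈ A, ∃ C : ℝ, ∀ g : G, |φ g| ≤ C)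
    (hadd : ∀ φ ∈ A, ∀ ψ ∈ A, φ + ψ ∈ A ∧ φ * ψ ∈ A)
    (hsmul : ∀ (c : ℝ) (φ : G → ℝ), φ ∈ A → c • φ ∈ A)
    (hone : (fun _ : G => (1 : ℝ)) ∈ A)
    (hsep : ∃ D ⊆ A, D.Countable ∧
      ∀ φ ∈ A, ∀ ε : ℝ, 0 < ε → ∃ ψ ∈ D, ∀ g : G, |φ g - ψ g| < ε) :
    ∃ p : ℕ → G → ℝ,
      (∀ n : ℕ, (∀ g : G, 0 ≤ p n g) ∧ Summable (p n) ∧ ∑' g : G, p n g = 1) ∧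
      (∀ h ∈ H, Filter.Tendsto (fun n => ∑' g : G, |p n (h⁻¹ * g * h) - p n g|)
        Filter.atTop (nhds 0)) ∧
      (∀ φ ∈ A, Filter.Tendsto (fun n => ∑' g : G, p n g * φ g)
        Filter.atTop (nhds (m.integral φ))) := by
  classical
  open MazurAux MazurAux2 MazurAux3 MazurAux4 MazurAux5 MazurAux6 MazurAux7 MazurAux8 in
  obtain ⟨D, hDA, hDc, hDdense⟩ := hsep
  obtain ⟨ψ0, hψ0D, -⟩ := hDdense _ hone 1 one_pos
  obtain ⟨dfun, hdfun⟩ := hDc.exists_eq_range ⟨ψ0, hψ0D⟩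
  have hdA : ∀ k, dfun k ∈ A := fun k => hDA (hdfun ▸ Set.mem_range_self k)
  set Cfun : ℕ → ℝ := fun k => (hbdd (dfun k) (hdA k)).choose with hCfun_def
  have hCfun : ∀ k g, |dfun k g| ≤ Cfun k := fun k => (hbdd (dfun k) (hdA k)).choose_spec
  haveI : Nonempty ↥H := ⟨1⟩
  obtain ⟨e, he⟩ := exists_surjective_nat ↥H
  have main : ∀ n : ℕ, ∃ (s : Finset G) (p : G → ℝ), (∀ g, 0 ≤ p g) ∧ (∀ g ∉ s, p g = 0) ∧
      (∑ g ∈ s, p g = 1) ∧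
      (∀ j : Fin (n+1), |∑ g ∈ s, p g * dfun j.1 g - m.integral (dfun j.1)| ≤ 1/(n+1)) ∧
      (∀ j : Fin (n+1), ∑ g ∈ MazurAux8.sbar s ((e j.1 : ↥H) : G),
        |p (((e j.1 : ↥H) : G)⁻¹ * g * ((e j.1 : ↥H) : G)) - p g| ≤ 1/(n+1)) := by
    intro n
    exact MazurAux8.mazur_step m H hm (fun j : Fin (n+1) => ((e j.1 : ↥H) : G))
      (fun j => (e j.1).2) (fun j => dfun j.1) (fun j => Cfun j.1)
      (fun j g => hCfun j.1 g) (by positivity)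
  choose s p hp0 hpz hp1 hpd hpc using main
  have htsum_one : ∀ n, ∑' g : G, p n g = ∑ g ∈ s n, p n g := fun n => tsum_eq_sum (hpz n)
  refine ⟨p, fun n => ⟨hp0 n, summable_of_ne_finset_zero (hpz n),
    (htsum_one n).trans (hp1 n)⟩, ?_, ?_⟩
  · -- conjugation invariance
    intro h hH
    obtain ⟨j0, hj0⟩ := he ⟨h, hH⟩
    rw [Metric.tendsto_atTop]
    intro ε hε
    refine ⟨max j0 ⌈1/ε⌉₊, fun n hn => ?_⟩
    have hj0n : j0 ≤ n := le_trans (le_max_left _ _) hn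
    set j : Fin (n+1) := ⟨j0, by omega⟩ with hj
    have hcoe : ((e j.1 : ↥H) : G) = h := by rw [hj, hj0]
    have hzero : ∀ g ∉ MazurAux8.sbar (s n) h, |p n (h⁻¹ * g * h) - p n g| = 0 := by
      intro g hg
      rw [abs_eq_zero]
      exact MazurAux8.diff_zero_off_sbar (hpz n) h g hg
    have heq : ∑' g : G, |p n (h⁻¹ * g * h) - p n g|
        = ∑ g ∈ MazurAux8.sbar (s n) h, |p n (h⁻¹ * g * h) - p n g| := tsum_eq_sum hzero
    have hb := hpc n j
    rw [hcoe] at hb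
    rw [Real.dist_eq, sub_zero]
    have hnn : 0 ≤ ∑' g : G, |p n (h⁻¹ * g * h) - p n g| := by
      rw [heq]
      exact Finset.sum_nonneg fun g _ => abs_nonneg _
    rw [abs_of_nonneg hnn, heq]
    refine lt_of_le_of_lt hb ?_
    have hceil : (⌈1/ε⌉₊ : ℝ) ≤ n := by
      exact_mod_cast Nat.cast_le.mpr (le_trans (le_max_right j0 _) hn)
    have h1ε : 1/ε ≤ (n : ℝ) := le_trans (Nat.le_ceil _) hceil
    rw [div_lt_iff₀ (by positivity)]
    have h2ε : (1:ℝ) ≤ ε * n := by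
      rw [div_le_iff₀ hε] at h1ε
      nlinarith
    nlinarith
  · -- convergence on A
    intro φ hφ
    obtain ⟨Cφ, hCφ⟩ := hbdd φ hφ
    rw [Metric.tendsto_atTop]
    intro ε hε
    obtain ⟨ψ, hψD, hψ⟩ := hDdense φ hφ (ε/4) (by positivity)
    obtain ⟨j0, hj0⟩ : ∃ j0, dfun j0 = ψ := by
      have := hdfun ▸ hψD
      obtain ⟨j0, hj0⟩ := this
      exact ⟨j0, hj0⟩
    have hCψ : ∀ g, |ψ g| ≤ Cfun j0 := fun g => hj0 ▸ hCfun j0 g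
    -- |I φ - I ψ| ≤ ε/4
    have hsub : m.integral (fun g => φ g + (-ψ g)) = m.integral φ - m.integral ψ := by
      rw [MazurAux4.integral_add m (C := Cφ) (C' := Cfun j0) hCφ
        (fun g => by rw [abs_neg]; exact hCψ g), MazurAux4.integral_neg m hCψ]
      ring
    have hdb : ∀ g, |φ g + (-ψ g)| ≤ Cφ + Cfun j0 := fun g => by
      have := MazurAux8.abs_sub_le_abs_add_abs (φ g) (ψ g)
      rw [sub_eq_add_neg] at this
      exact this.trans (add_le_add (hCφ g) (hCψ g))
    have hIle : m.integral (fun g => φ g + (-ψ g)) ≤ ε/4 :=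
      MazurAux3.integral_le m (C := ε/4) (c := -(Cφ + Cfun j0)) (fun g => by
          have := hψ g; rw [sub_eq_add_neg] at this; linarith [abs_le.mp this.le])
        (fun g => by linarith [(abs_le.mp (hdb g)).1])
    have hIge : -(ε/4) ≤ m.integral (fun g => φ g + (-ψ g)) := by
      have hc := MazurAux4.integral_const m (X := G) (-(ε/4))
      rw [← hc]
      refine MazurAux4.integral_mono m (C := Cφ + Cfun j0) hdb (c := -(ε/4))
        (fun g => le_rfl) (fun g => ?_)
      have := hψ g; rw [sub_eq_add_neg] at this
      linarith [abs_le.mp this.le]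
    have hIabs : |m.integral φ - m.integral ψ| ≤ ε/4 := by
      rw [← hsub]; rw [abs_le]; exact ⟨by linarith, by linarith⟩
    refine ⟨max j0 ⌈4/ε⌉₊, fun n hn => ?_⟩
    have hj0n : j0 ≤ n := le_trans (le_max_left _ _) hn
    set j : Fin (n+1) := ⟨j0, by omega⟩ with hj
    have hmid := hpd n j
    have hmid' : |∑ g ∈ s n, p n g * ψ g - m.integral ψ| ≤ 1/(n+1) := by
      have : dfun j.1 = ψ := by rw [hj]; exact hj0
      rwa [this] at hmid
    have htsum : ∑' g : G, p n g * φ g = ∑ g ∈ s n, p n g * φ g :=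
      tsum_eq_sum (fun g hg => by rw [hpz n g hg, zero_mul])
    have hXY : |∑ g ∈ s n, p n g * φ g - ∑ g ∈ s n, p n g * ψ g| ≤ ε/4 := by
      rw [← Finset.sum_sub_distrib]
      have h1 : ∀ g ∈ s n, |p n g * φ g - p n g * ψ g| ≤ p n g * (ε/4) := by
        intro g _
        rw [← mul_sub, abs_mul, abs_of_nonneg (hp0 n g)]
        exact mul_le_mul_of_nonneg_left (hψ g).le (hp0 n g)
      calc |∑ g ∈ s n, (p n g * φ g - p n g * ψ g)|
          ≤ ∑ g ∈ s n, |p n g * φ g - p n g * ψ g| := Finset.abs_sum_le_sum_abs _ _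
        _ ≤ ∑ g ∈ s n, p n g * (ε/4) := Finset.sum_le_sum h1
        _ = (ε/4) := by rw [← Finset.sum_mul, hp1 n, one_mul]
    have hsmall : 1/((n:ℝ)+1) < ε/4 := by
      have hceil : (⌈4/ε⌉₊ : ℝ) ≤ n :=
        Nat.cast_le.mpr (le_trans (le_max_right j0 _) hn)
      have h4ε : 4/ε ≤ (n : ℝ) := le_trans (Nat.le_ceil _) hceil
      rw [div_lt_div_iff₀ (by positivity) (by norm_num : (0:ℝ) < 4)]
      have : 4 ≤ ε * n := by
        rw [div_le_iff₀ hε] at h4ε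
        linarith [h4ε]
      nlinarith
    rw [Real.dist_eq, htsum]
    have hdecomp : ∑ g ∈ s n, p n g * φ g - m.integral φ
        = (∑ g ∈ s n, p n g * φ g - ∑ g ∈ s n, p n g * ψ g)
          + (∑ g ∈ s n, p n g * ψ g - m.integral ψ)
          + (m.integral ψ - m.integral φ) := by ring
    rw [hdecomp]
    calc |_ + _ + (m.integral ψ - m.integral φ)|
        ≤ |(∑ g ∈ s n, p n g * φ g - ∑ g ∈ s n, p n g * ψ g)
            + (∑ g ∈ s n, p n g * ψ g - m.integral ψ)| + |m.integral ψ - m.integral φ| :=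
          abs_add_le _ _
      _ ≤ |∑ g ∈ s n, p n g * φ g - ∑ g ∈ s n, p n g * ψ g|
            + |∑ g ∈ s n, p n g * ψ g - m.integral ψ| + |m.integral ψ - m.integral φ| := by
          linarith [abs_add_le (∑ g ∈ s n, p n g * φ g - ∑ g ∈ s n, p n g * ψ g)
            (∑ g ∈ s n, p n g * ψ g - m.integral ψ)]
      _ ≤ ε/4 + 1/((n:ℝ)+1) + ε/4 := by
          refine add_le_add (add_le_add hXY ?_) ?_
          · exact_mod_cast hmid'
          · rw [abs_sub_comm]; exact hIabs
      _ < ε := by linarith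
end
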